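/- arXiv:1212.3970 — 3 statements merged into one kernel-verified Lean document; each statement's English description precedes it below -/
import Mathlib

section
/- s(K) ≥ 3 (i.e., there exists an m×3 integer matrix satisfying condition (A) for K) if and only if condition (S3) holds: N(K) contains one of the following configurations of pairwise distinct elements: (1) τ₁,…,τ₇ with τ₁∩τ₂∩τ₄ = ∅, τ₁∩τ₃∩τ₅ = ∅, τ₁∩τ₆∩τ₇ = ∅, τ₂∩τ₃∩τ₆ = ∅, τ₂∩τ₅∩τ₇ = ∅, τ₃∩τ₄∩τ₇ = ∅, τ₄∩τ₅∩τ₆ = ∅; (2) τ₁,…,τ₆ with τ₁∩τ₃ = ∅, τ₁∩τ₂∩τ₄ = ∅, τ₁∩τ₂∩τ₅ = ∅, τ₁∩τ₄∩τ₆ = ∅, τ₁∩τ₅∩τ₆ = ∅, τ₂∩τ₃∩τ₆ = ∅, τ₃∩τ₄∩τ₅ = ∅; (3) τ₁,…,τ₅ with τ₁∩τ₂ = ∅, τ₁∩τ₅ = ∅, τ₁∩τ₃∩τ₄ = ∅, τ₂∩τ₃∩τ₅ = ∅, τ₂∩τ₄∩τ₅ = ∅; (4) τ₁,…,τ₄ with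 τ₁ ∩ (τ₂ ∪ τ₃ ∪ τ₄) = ∅ and τ₂∩τ₃∩τ₄ = ∅; (5) τ₁, τ₂, τ₃ with τ₁∩τ₂ = τ₁∩τ₃ = τ₂∩τ₃ = ∅. -/
set_option maxRecDepth 100000
set_option synthInstance.maxSize 4000
set_option synthInstance.maxHeartbeats 1000000

/-- `K` is an abstract simplicial complex on the vertex set `[m]`:
it contains the empty set and is closed under taking subsets. -/
def IsSimplicialComplex (m : ℕ) (K : Set (Finset (Fin m))) : Prop :=
  ∅ ∈ K ∧ ∀ σ ∈ K, ∀ τ ⊆ σ, τ ∈ K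

/-- `ω` is a minimal non-simplex of `K`: `ω ∉ K` but every proper subset of `ω` is in `K`. -/
def MinimalNonSimplex (m : ℕ) (K : Set (Finset (Fin m))) (ω : Finset (Fin m)) : Prop :=
  ω ∉ K ∧ ∀ τ ⊂ ω, τ ∈ K

/-- Condition (A): for every simplex `σ ∈ K` the rows `{Sⁱ : i ∉ σ}`
generate `ℤᵏ` as an abelian group. -/
def CondA (m k : ℕ) (K : Set (Finset (Fin m))) (S : Matrix (Fin m) (Fin k) ℤ) : Prop :=
  ∀ σ ∈ K, Submodule.span ℤ ((fun i => S i) '' {i : Fin m | i ∉ σ}) = ⊤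

/-- Condition (A2): for every simplex `σ ∈ K` the rows `{Sⁱ : i ∉ σ}` span `𝔽₂ᵏ`. -/
def CondA2 (m k : ℕ) (K : Set (Finset (Fin m))) (S : Matrix (Fin m) (Fin k) (ZMod 2)) : Prop :=
  ∀ σ ∈ K, Submodule.span (ZMod 2) ((fun i => S i) '' {i : Fin m | i ∉ σ}) = ⊤

/-- Condition (S2): `N(K)` contains two disjoint elements, or three pairwise distinct
elements with empty common intersection. -/
def CondS2 (m : ℕ) (K : Set (Finset (Fin m))) : Prop :=
  (∃ τ₁ τ₂ τ₃ : Finset (Fin m), MinimalNonSimplex m K τ₁ ∧ MinimalNonSimplex m K τ₂ ∧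
    MinimalNonSimplex m K τ₃ ∧ τ₁ ≠ τ₂ ∧ τ₁ ≠ τ₃ ∧ τ₂ ≠ τ₃ ∧ τ₁ ∩ τ₂ ∩ τ₃ = ∅) ∨
  (∃ τ₁ τ₂ : Finset (Fin m), MinimalNonSimplex m K τ₁ ∧ MinimalNonSimplex m K τ₂ ∧
    τ₁ ≠ τ₂ ∧ τ₁ ∩ τ₂ = ∅)

/-- Condition (S3): `N(K)` contains one of five configurations of pairwise distinct
elements described in Proposition (S3). -/
def CondS3 (m : ℕ) (K : Set (Finset (Fin m))) : Prop :=
  (∃ τ₁ τ₂ τ₃ τ₄ τ₅ τ₆ τ₇ : Finset (Fin m),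
    (∀ τ ∈ [τ₁, τ₂, τ₃, τ₄, τ₅, τ₆, τ₇], MinimalNonSimplex m K τ) ∧
    [τ₁, τ₂, τ₃, τ₄, τ₅, τ₆, τ₇].Pairwise (· ≠ ·) ∧
    τ₁ ∩ τ₂ ∩ τ₄ = ∅ ∧ τ₁ ∩ τ₃ ∩ τ₅ = ∅ ∧ τ₁ ∩ τ₆ ∩ τ₇ = ∅ ∧
    τ₂ ∩ τ₃ ∩ τ₆ = ∅ ∧ τ₂ ∩ τ₅ ∩ τ₇ = ∅ ∧ τ₃ ∩ τ₄ ∩ τ₇ = ∅ ∧ τ₄ ∩ τ₅ ∩ τ₆ = ∅) ∨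
  (∃ τ₁ τ₂ τ₃ τ₄ τ₅ τ₆ : Finset (Fin m),
    (∀ τ ∈ [τ₁, τ₂, τ₃, τ₄, τ₅, τ₆], MinimalNonSimplex m K τ) ∧
    [τ₁, τ₂, τ₃, τ₄, τ₅, τ₆].Pairwise (· ≠ ·) ∧
    τ₁ ∩ τ₃ = ∅ ∧ τ₁ ∩ τ₂ ∩ τ₄ = ∅ ∧ τ₁ ∩ τ₂ ∩ τ₅ = ∅ ∧
    τ₁ ∩ τ₄ ∩ τ₆ = ∅ ∧ τ₁ ∩ τ₅ ∩ τ₆ = ∅ ∧ τ₂ ∩ τ₃ ∩ τ₆ = ∅ ∧ τ₃ ∩ τ₄ ∩ τ₅ = ∅) ∨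
  (∃ τ₁ τ₂ τ₃ τ₄ τ₅ : Finset (Fin m),
    (∀ τ ∈ [τ₁, τ₂, τ₃, τ₄, τ₅], MinimalNonSimplex m K τ) ∧
    [τ₁, τ₂, τ₃, τ₄, τ₅].Pairwise (· ≠ ·) ∧
    τ₁ ∩ τ₂ = ∅ ∧ τ₁ ∩ τ₅ = ∅ ∧ τ₁ ∩ τ₃ ∩ τ₄ = ∅ ∧
    τ₂ ∩ τ₃ ∩ τ₅ = ∅ ∧ τ₂ ∩ τ₄ ∩ τ₅ = ∅) ∨
  (∃ τ₁ τ₂ τ₃ τ₄ : Finset (Fin m),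
    (∀ τ ∈ [τ₁, τ₂, τ₃, τ₄], MinimalNonSimplex m K τ) ∧
    [τ₁, τ₂, τ₃, τ₄].Pairwise (· ≠ ·) ∧
    τ₁ ∩ (τ₂ ∪ τ₃ ∪ τ₄) = ∅ ∧ τ₂ ∩ τ₃ ∩ τ₄ = ∅) ∨
  (∃ τ₁ τ₂ τ₃ : Finset (Fin m),
    (∀ τ ∈ [τ₁, τ₂, τ₃], MinimalNonSimplex m K τ) ∧
    [τ₁, τ₂, τ₃].Pairwise (· ≠ ·) ∧
    τ₁ ∩ τ₂ = ∅ ∧ τ₁ ∩ τ₃ = ∅ ∧ τ₂ ∩ τ₃ = ∅)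

/-! ### Fano plane infrastructure on `Fin 7` -/

def lf (i j : Fin 7) : Fin 7 :=
  ⟨((((i : ℕ) + 1) ^^^ ((j : ℕ) + 1)) + 6) % 7, Nat.mod_lt _ (by norm_num)⟩

def pt (i : Fin 7) (j : Fin 3) : ZMod 2 := ((((i : ℕ) + 1) >>> (j : ℕ)) % 2 : ℕ)

lemma lf_comm : ∀ i j : Fin 7, lf i j = lf j i := by decide
lemma lf_invol : ∀ i j : Fin 7, i ≠ j → lf i (lf i j) = j := by decide
lemma pt_add : ∀ i j : Fin 7, i ≠ j → pt i + pt j = pt (lf i j) := by decide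
lemma pt_surj : ∀ φ : Fin 3 → ZMod 2, φ ≠ 0 → ∃ p : Fin 7, pt p = φ := by decide
lemma pt_one : ∀ p : Fin 7, ∃ j : Fin 3, pt p j = 1 := by decide

lemma hyperplane : ∀ T : Finset (Fin 7),
    (∀ p ∈ T, ∀ q ∈ T, p ≠ q → lf p q ∉ T) →
    ∃ d : Fin 7, ∀ p ∈ T, dotProduct (pt p) (pt d) = 1 := by decide

lemma gp3a : ∀ a b k : Fin 7, a ≠ b → k ≠ a → k ≠ b → k ≠ lf a b →
    lf a (lf b k) = lf (lf a b) k := by decide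
lemma gp3b : ∀ a b k : Fin 7, a ≠ b → k ≠ a → k ≠ b → k ≠ lf a b →
    lf (lf a b) (lf a k) = lf b k := by decide
lemma gp3c : ∀ a b k : Fin 7, a ≠ b → k ≠ a → k ≠ b → k ≠ lf a b →
    lf (lf a k) (lf b k) = lf a b := by decide
lemma gp3d : ∀ a b k : Fin 7, a ≠ b → k ≠ a → k ≠ b → k ≠ lf a b →
    lf (lf a k) (lf (lf a b) k) = b := by decide
lemma gp3e : ∀ a b k : Fin 7, a ≠ b → k ≠ a → k ≠ b → k ≠ lf a b →
    lf (lf b k) (lf (lf a b) k) = a := by decide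
lemma gp3f : ∀ a b k : Fin 7, a ≠ b → k ≠ a → k ≠ b → k ≠ lf a b →
    lf (lf a b) (lf b k) = lf a k := by decide
lemma distinct7 : ∀ a b k : Fin 7, a ≠ b → k ≠ a → k ≠ b → k ≠ lf a b →
    List.Pairwise (· ≠ ·) [a, b, lf a b, k, lf a k, lf b k, lf (lf a b) k] := by decide
lemma exists_k : ∀ a b : Fin 7, a ≠ b → ∃ k, k ≠ a ∧ k ≠ b ∧ k ≠ lf a b := by decide
lemma gptri : ∀ a b c : Fin 7, a ≠ b → a ≠ c → b ≠ c → c ≠ lf a b →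
    lf (lf a b) (lf a c) = lf b c := by decide

/-! ### `ℤ` / `ZMod 2` linear algebra -/

def red (w : Fin 3 → ℤ) (j : Fin 3) : ZMod 2 := (w j : ZMod 2)
def liftv (u : Fin 3 → ZMod 2) (j : Fin 3) : ℤ := ((u j).val : ℤ)
def crossv (u v : Fin 3 → ZMod 2) : Fin 3 → ZMod 2 :=
  ![u 1 * v 2 + u 2 * v 1, u 0 * v 2 + u 2 * v 0, u 0 * v 1 + u 1 * v 0]

lemma red_liftv (u : Fin 3 → ZMod 2) : red (liftv u) = u := by
  funext j
  have : ∀ z : ZMod 2, ((z.val : ℤ) : ZMod 2) = z := by decide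
  exact this (u j)

lemma liftv01 (u : Fin 3 → ZMod 2) (j : Fin 3) : liftv u j = 0 ∨ liftv u j = 1 := by
  have : ∀ z : ZMod 2, (z.val : ℤ) = 0 ∨ (z.val : ℤ) = 1 := by decide
  exact this (u j)

lemma e1_ne : (![1,0,0] : Fin 3 → ZMod 2) ≠ 0 := by decide

lemma dote1 : ∀ x : Fin 3 → ZMod 2, dotProduct ![1,0,0] x = 1 → x 0 = 1 := by decide

lemma phi2_ne : ∀ u : Fin 3 → ZMod 2, (![u 1, 1, 0] : Fin 3 → ZMod 2) ≠ 0 := by decide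

lemma cross_ne : ∀ u v : Fin 3 → ZMod 2, u 0 = 1 →
    dotProduct ![u 1, 1, 0] v = 1 → crossv u v ≠ 0 := by decide

lemma det_pm_one : ∀ u v w : Fin 3 → ZMod 2, u 0 = 1 →
    dotProduct ![u 1, 1, 0] v = 1 → dotProduct (crossv u v) w = 1 →
    Matrix.det ![liftv u, liftv v, liftv w] = 1 ∨
    Matrix.det ![liftv u, liftv v, liftv w] = -1 := by decide

lemma span_top_of_hits (W : Set (Fin 3 → ℤ))
    (h01 : ∀ w ∈ W, ∀ j, w j = 0 ∨ w j = 1)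
    (hodd : ∀ φ : Fin 3 → ZMod 2, φ ≠ 0 → ∃ w ∈ W, dotProduct φ (red w) = 1) :
    Submodule.span ℤ W = ⊤ := by
  obtain ⟨w1, hw1, h1⟩ := hodd ![1,0,0] e1_ne
  obtain ⟨w2, hw2, h2⟩ := hodd ![red w1 1, 1, 0] (phi2_ne (red w1))
  obtain ⟨w3, hw3, h3⟩ := hodd (crossv (red w1) (red w2))
    (cross_ne _ _ (dote1 _ h1) h2)
  have hlift : ∀ w ∈ W, liftv (red w) = w := by
    intro w hw; funext j
    rcases h01 w hw j with h | h <;> simp only [liftv, red, h] <;> decide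
  have hdet := det_pm_one (red w1) (red w2) (red w3) (dote1 _ h1) h2 h3
  rw [hlift w1 hw1, hlift w2 hw2, hlift w3 hw3] at hdet
  set M : Matrix (Fin 3) (Fin 3) ℤ := ![w1, w2, w3] with hMdef
  have hMu : IsUnit M.det := by rcases hdet with h | h <;> simp [M, h]
  have hN : M⁻¹ * M = 1 := Matrix.nonsing_inv_mul M hMu
  rw [eq_top_iff]
  rintro x -
  have hx : x = Matrix.vecMul (Matrix.vecMul x M⁻¹) M := by
    rw [Matrix.vecMul_vecMul, hN, Matrix.vecMul_one]
  have hsum : Matrix.vecMul (Matrix.vecMul x M⁻¹) M = ∑ k, (Matrix.vecMul x M⁻¹) k • M k := by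
    funext j
    simp [Matrix.vecMul, dotProduct, Finset.sum_apply, smul_eq_mul]
  rw [hx, hsum]
  refine Submodule.sum_mem _ (fun k _ => Submodule.smul_mem _ _ (Submodule.subset_span ?_))
  fin_cases k
  · simpa [M] using hw1
  · simpa [M] using hw2
  · simpa [M] using hw3

/-! ### Generic helpers -/

lemma empty_of_sub {α : Type*} {X Y : Finset α} (h : Y = ∅) (hsub : X ⊆ Y) : X = ∅ :=
  Finset.subset_empty.1 (h ▸ hsub)

lemma exists_mns {m : ℕ} {K : Set (Finset (Fin m))} :
    ∀ ω : Finset (Fin m), ω ∉ K → ∃ τ ⊆ ω, MinimalNonSimplex m K τ := by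
  intro ω
  induction ω using Finset.strongInduction with
  | _ ω ih =>
    intro hω
    by_cases h : ∀ τ ⊂ ω, τ ∈ K
    · exact ⟨ω, subset_rfl, hω, h⟩
    · push_neg at h
      obtain ⟨τ, hsub, hτ⟩ := h
      obtain ⟨ρ, hρsub, hρ⟩ := ih τ hsub hτ
      exact ⟨ρ, hρsub.trans hsub.subset, hρ⟩

lemma mns_nonempty {m : ℕ} {K : Set (Finset (Fin m))} (hK : IsSimplicialComplex m K)
    {τ : Finset (Fin m)} (h : MinimalNonSimplex m K τ) : τ ≠ ∅ := by
  intro he; exact h.1 (he ▸ hK.1)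

lemma ne_of_disj {α : Type*} [DecidableEq α] {A B : Finset α} (hne : A ≠ ∅) (h : A ∩ B = ∅) : A ≠ B := by
  rintro rfl; rw [Finset.inter_self] at h; exact hne h

/-! ### From condition (A) to a Fano labelling by minimal non-simplices -/

lemma main_fwd {m : ℕ} {K : Set (Finset (Fin m))} (hK : IsSimplicialComplex m K)
    (S : Matrix (Fin m) (Fin 3) ℤ) (hS : CondA m 3 K S) :
    ∃ t : Fin 7 → Finset (Fin m), (∀ p, MinimalNonSimplex m K (t p)) ∧
      (∀ p q, p ≠ q → t p ∩ t q ∩ t (lf p q) = ∅) := by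
  classical
  set A : Fin 7 → Finset (Fin m) :=
    fun p => Finset.univ.filter (fun i => dotProduct (pt p) (red (S i)) = 1) with hA
  have hAnk : ∀ p, A p ∉ K := by
    intro p hmem
    have hsp := hS _ hmem
    set L : (Fin 3 → ℤ) →+ ZMod 2 :=
      { toFun := fun w => dotProduct (pt p) (red w)
        map_zero' := by
          have : red 0 = 0 := by funext j; simp [red]
          simp [this]
        map_add' := by
          intro a b
          have : red (a + b) = red a + red b := by funext j; simp [red]
          simp [this, dotProduct_add] } with hL
    have hker : Submodule.span ℤ ((fun i => S i) '' {i : Fin m | i ∉ A p}) ≤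
        LinearMap.ker (AddMonoidHom.toIntLinearMap L) := by
      rw [Submodule.span_le]
      rintro w ⟨i, hi, rfl⟩
      simp only [Set.mem_setOf_eq, hA, Finset.mem_filter, Finset.mem_univ, true_and] at hi
      have h0 : dotProduct (pt p) (red (S i)) = 0 := by
        have : ∀ z : ZMod 2, ¬ z = 1 → z = 0 := by decide
        exact this _ hi
      simpa [LinearMap.mem_ker, hL] using h0
    rw [hsp, top_le_iff] at hker
    obtain ⟨j0, hj0⟩ := pt_one p
    set w : Fin 3 → ℤ := fun j => if j = j0 then 1 else 0 with hw
    have hredw : red w = fun j => if j = j0 then 1 else 0 := by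
      funext j; by_cases h : j = j0 <;> simp [red, hw, h]
    have hLw : L w = 1 := by
      show dotProduct (pt p) (red w) = 1
      have : dotProduct (pt p) (red w) = pt p j0 := by
        rw [hredw]
        simp [dotProduct, Finset.sum_ite_eq']
      rw [this, hj0]
    have hz : L w = 0 := by
      have h2 : w ∈ LinearMap.ker (AddMonoidHom.toIntLinearMap L) := by rw [hker]; trivial
      exact LinearMap.mem_ker.1 h2
    rw [hLw] at hz
    exact absurd hz (by decide)
  have hch := fun p => exists_mns (A p) (hAnk p)
  choose τ hτsub hτ using hch
  refine ⟨τ, hτ, ?_⟩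
  intro p q hpq
  have hAe : A p ∩ A q ∩ A (lf p q) = ∅ := by
    rw [Finset.eq_empty_iff_forall_notMem]
    intro i hi
    simp only [Finset.mem_inter, hA, Finset.mem_filter, Finset.mem_univ, true_and] at hi
    obtain ⟨⟨h1, h2⟩, h3⟩ := hi
    rw [← pt_add p q hpq, add_dotProduct, h1, h2] at h3
    exact absurd h3 (by decide)
  exact empty_of_sub hAe
    (Finset.inter_subset_inter (Finset.inter_subset_inter (hτsub p) (hτsub q)) (hτsub (lf p q)))

/-! ### From a Fano labelling by non-simplices to condition (A) -/

lemma main_rev {m : ℕ} {K : Set (Finset (Fin m))} (hK : IsSimplicialComplex m K)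
    (t : Fin 7 → Finset (Fin m)) (hnk : ∀ p, t p ∉ K)
    (hline : ∀ p q, p ≠ q → t p ∩ t q ∩ t (lf p q) = ∅) :
    ∃ S : Matrix (Fin m) (Fin 3) ℤ, CondA m 3 K S := by
  classical
  have hch : ∀ i : Fin m, ∃ d : Fin 7, ∀ p : Fin 7, i ∈ t p →
      dotProduct (pt p) (pt d) = 1 := by
    intro i
    have hfree : ∀ p ∈ Finset.univ.filter (fun p => i ∈ t p),
        ∀ q ∈ Finset.univ.filter (fun p => i ∈ t p), p ≠ q →
        lf p q ∉ Finset.univ.filter (fun p => i ∈ t p) := by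
      intro p hp q hq hpq hmem
      simp only [Finset.mem_filter, Finset.mem_univ, true_and] at hp hq hmem
      have h := hline p q hpq
      have hh : i ∈ t p ∩ t q ∩ t (lf p q) := by
        simp [Finset.mem_inter, hp, hq, hmem]
      rw [h] at hh
      simp at hh
    obtain ⟨d, hd⟩ := hyperplane _ hfree
    exact ⟨d, fun p hp => hd p (by simp [hp])⟩
  choose d hd using hch
  refine ⟨fun i => liftv (pt (d i)), ?_⟩
  intro σ hσ
  apply span_top_of_hits
  · rintro w ⟨i, -, rfl⟩ j; exact liftv01 _ _
  · intro φ hφ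
    obtain ⟨p, rfl⟩ := pt_surj φ hφ
    have hns : ¬ t p ⊆ σ := fun hsub => hnk p (hK.2 σ hσ _ hsub)
    obtain ⟨i, hip, hiσ⟩ := Finset.not_subset.1 hns
    exact ⟨liftv (pt (d i)), ⟨i, hiσ, rfl⟩, by rw [red_liftv]; exact hd i p hip⟩

/-! ### Intersection helpers -/

lemma mem3_sub {α : Type*} [DecidableEq α] {a b c X : Finset α}
    (h : X = a ∨ X = b ∨ X = c) : a ∩ b ∩ c ⊆ X := by
  rcases h with rfl | rfl | rfl
  · exact Finset.inter_subset_left.trans Finset.inter_subset_left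
  · exact Finset.inter_subset_left.trans Finset.inter_subset_right
  · exact Finset.inter_subset_right

lemma tri_from3 {α : Type*} [DecidableEq α] {A B C a b c : Finset α} (h : A ∩ B ∩ C = ∅)
    (hA : A = a ∨ A = b ∨ A = c) (hB : B = a ∨ B = b ∨ B = c) (hC : C = a ∨ C = b ∨ C = c) :
    a ∩ b ∩ c = ∅ :=
  empty_of_sub h (Finset.subset_inter (Finset.subset_inter (mem3_sub hA) (mem3_sub hB))
    (mem3_sub hC))

lemma tri_from2 {α : Type*} [DecidableEq α] {A B a b c : Finset α} (h : A ∩ B = ∅)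
    (hA : A = a ∨ A = b ∨ A = c) (hB : B = a ∨ B = b ∨ B = c) :
    a ∩ b ∩ c = ∅ :=
  empty_of_sub h (Finset.subset_inter (mem3_sub hA) (mem3_sub hB))

lemma pair_from2 {α : Type*} [DecidableEq α] {A B a b : Finset α} (h : A ∩ B = ∅)
    (hA : A = a ∨ A = b) (hB : B = a ∨ B = b) : a ∩ b = ∅ := by
  refine empty_of_sub h (Finset.subset_inter ?_ ?_) <;>
    [rcases hA with rfl | rfl; rcases hB with rfl | rfl] <;>
    first
      | exact Finset.inter_subset_left
      | exact Finset.inter_subset_right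

lemma disj_symm {α : Type*} [DecidableEq α] {A B : Finset α} (h : A ∩ B = ∅) : B ∩ A = ∅ := by
  rwa [Finset.inter_comm]

/-! ### Label selectors -/

abbrev sel3 {α : Type*} (a b c : α) : Fin 3 → α :=
  fun l => if l = 0 then a else if l = 1 then b else c

lemma sel3_0 {α : Type*} (a b c : α) : sel3 a b c (0 : Fin 3) = a := rfl
lemma sel3_1 {α : Type*} (a b c : α) : sel3 a b c (1 : Fin 3) = b := rfl
lemma sel3_2 {α : Type*} (a b c : α) : sel3 a b c (2 : Fin 3) = c := rfl

abbrev sel4 {α : Type*} (a b c d : α) : Fin 4 → α :=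
  fun l => if l = 0 then a else if l = 1 then b else if l = 2 then c else d

lemma sel4_0 {α : Type*} (a b c d : α) : sel4 a b c d (0 : Fin 4) = a := rfl
lemma sel4_1 {α : Type*} (a b c d : α) : sel4 a b c d (1 : Fin 4) = b := rfl
lemma sel4_2 {α : Type*} (a b c d : α) : sel4 a b c d (2 : Fin 4) = c := rfl
lemma sel4_3 {α : Type*} (a b c d : α) : sel4 a b c d (3 : Fin 4) = d := rfl

abbrev sel5 {α : Type*} (a b c d e : α) : Fin 5 → α :=
  fun l => if l = 0 then a else if l = 1 then b else if l = 2 then c else if l = 3 then d else e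

lemma sel5_0 {α : Type*} (a b c d e : α) : sel5 a b c d e (0 : Fin 5) = a := rfl
lemma sel5_1 {α : Type*} (a b c d e : α) : sel5 a b c d e (1 : Fin 5) = b := rfl
lemma sel5_2 {α : Type*} (a b c d e : α) : sel5 a b c d e (2 : Fin 5) = c := rfl
lemma sel5_3 {α : Type*} (a b c d e : α) : sel5 a b c d e (3 : Fin 5) = d := rfl
lemma sel5_4 {α : Type*} (a b c d e : α) : sel5 a b c d e (4 : Fin 5) = e := rfl

abbrev sel6 {α : Type*} (a b c d e f : α) : Fin 6 → α :=
  fun l => if l = 0 then a else if l = 1 then b else if l = 2 then c else if l = 3 then d else if l = 4 then e else f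

lemma sel6_0 {α : Type*} (a b c d e f : α) : sel6 a b c d e f (0 : Fin 6) = a := rfl
lemma sel6_1 {α : Type*} (a b c d e f : α) : sel6 a b c d e f (1 : Fin 6) = b := rfl
lemma sel6_2 {α : Type*} (a b c d e f : α) : sel6 a b c d e f (2 : Fin 6) = c := rfl
lemma sel6_3 {α : Type*} (a b c d e f : α) : sel6 a b c d e f (3 : Fin 6) = d := rfl
lemma sel6_4 {α : Type*} (a b c d e f : α) : sel6 a b c d e f (4 : Fin 6) = e := rfl
lemma sel6_5 {α : Type*} (a b c d e f : α) : sel6 a b c d e f (5 : Fin 6) = f := rfl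

abbrev sel7 {α : Type*} (a b c d e f g : α) : Fin 7 → α :=
  fun l => if l = 0 then a else if l = 1 then b else if l = 2 then c else if l = 3 then d else if l = 4 then e else if l = 5 then f else g

lemma sel7_0 {α : Type*} (a b c d e f g : α) : sel7 a b c d e f g (0 : Fin 7) = a := rfl
lemma sel7_1 {α : Type*} (a b c d e f g : α) : sel7 a b c d e f g (1 : Fin 7) = b := rfl
lemma sel7_2 {α : Type*} (a b c d e f g : α) : sel7 a b c d e f g (2 : Fin 7) = c := rfl
lemma sel7_3 {α : Type*} (a b c d e f g : α) : sel7 a b c d e f g (3 : Fin 7) = d := rfl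
lemma sel7_4 {α : Type*} (a b c d e f g : α) : sel7 a b c d e f g (4 : Fin 7) = e := rfl
lemma sel7_5 {α : Type*} (a b c d e f g : α) : sel7 a b c d e f g (5 : Fin 7) = f := rfl
lemma sel7_6 {α : Type*} (a b c d e f g : α) : sel7 a b c d e f g (6 : Fin 7) = g := rfl

/-! ### The five configurations give Fano labellings -/

abbrev memlab {n : ℕ} (g : Fin 7 → Fin n) (p q : Fin 7) (r : Fin n) : Prop :=
  g p = r ∨ g q = r ∨ g (lf p q) = r

lemma cv {α : Type*} {n : ℕ} (τs : Fin n → α) {g : Fin 7 → Fin n} {p q : Fin 7} {r : Fin n}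
    (h : memlab g p q r) :
    τs r = τs (g p) ∨ τs r = τs (g q) ∨ τs r = τs (g (lf p q)) := by
  rcases h with h | h | h
  · exact Or.inl (congrArg τs h).symm
  · exact Or.inr (Or.inl (congrArg τs h).symm)
  · exact Or.inr (Or.inr (congrArg τs h).symm)

abbrev gC1 : Fin 7 → Fin 7 := sel7 2 1 5 0 4 3 6

abbrev gC2 : Fin 7 → Fin 6 := sel7 1 0 4 0 3 2 5

abbrev gC3 : Fin 7 → Fin 5 := sel7 1 0 2 0 1 4 3

abbrev gC4 : Fin 7 → Fin 4 := sel7 0 2 0 1 0 3 0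

abbrev gC5 : Fin 7 → Fin 3 := sel7 2 0 2 0 2 1 2

lemma case1_dec : ∀ p q : Fin 7, p ≠ q →
    (memlab gC1 p q 0 ∧ memlab gC1 p q 1 ∧ memlab gC1 p q 3) ∨
    (memlab gC1 p q 0 ∧ memlab gC1 p q 2 ∧ memlab gC1 p q 4) ∨
    (memlab gC1 p q 0 ∧ memlab gC1 p q 5 ∧ memlab gC1 p q 6) ∨
    (memlab gC1 p q 1 ∧ memlab gC1 p q 2 ∧ memlab gC1 p q 5) ∨
    (memlab gC1 p q 1 ∧ memlab gC1 p q 4 ∧ memlab gC1 p q 6) ∨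
    (memlab gC1 p q 2 ∧ memlab gC1 p q 3 ∧ memlab gC1 p q 6) ∨
    (memlab gC1 p q 3 ∧ memlab gC1 p q 4 ∧ memlab gC1 p q 5) := by decide

lemma case2_dec : ∀ p q : Fin 7, p ≠ q →
    (memlab gC2 p q 0 ∧ memlab gC2 p q 2) ∨
    (memlab gC2 p q 0 ∧ memlab gC2 p q 1 ∧ memlab gC2 p q 3) ∨
    (memlab gC2 p q 0 ∧ memlab gC2 p q 1 ∧ memlab gC2 p q 4) ∨
    (memlab gC2 p q 0 ∧ memlab gC2 p q 3 ∧ memlab gC2 p q 5) ∨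
    (memlab gC2 p q 0 ∧ memlab gC2 p q 4 ∧ memlab gC2 p q 5) ∨
    (memlab gC2 p q 1 ∧ memlab gC2 p q 2 ∧ memlab gC2 p q 5) ∨
    (memlab gC2 p q 2 ∧ memlab gC2 p q 3 ∧ memlab gC2 p q 4) := by decide

lemma case3_dec : ∀ p q : Fin 7, p ≠ q →
    (memlab gC3 p q 0 ∧ memlab gC3 p q 1) ∨
    (memlab gC3 p q 0 ∧ memlab gC3 p q 4) ∨
    (memlab gC3 p q 0 ∧ memlab gC3 p q 2 ∧ memlab gC3 p q 3) ∨
    (memlab gC3 p q 1 ∧ memlab gC3 p q 2 ∧ memlab gC3 p q 4) ∨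
    (memlab gC3 p q 1 ∧ memlab gC3 p q 3 ∧ memlab gC3 p q 4) := by decide

lemma case4_dec : ∀ p q : Fin 7, p ≠ q →
    (memlab gC4 p q 0 ∧ memlab gC4 p q 1) ∨
    (memlab gC4 p q 0 ∧ memlab gC4 p q 2) ∨
    (memlab gC4 p q 0 ∧ memlab gC4 p q 3) ∨
    (memlab gC4 p q 1 ∧ memlab gC4 p q 2 ∧ memlab gC4 p q 3) := by decide

lemma case5_dec : ∀ p q : Fin 7, p ≠ q →
    (memlab gC5 p q 0 ∧ memlab gC5 p q 1) ∨
    (memlab gC5 p q 0 ∧ memlab gC5 p q 2) ∨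
    (memlab gC5 p q 1 ∧ memlab gC5 p q 2) := by decide

lemma comb_rev {m : ℕ} {K : Set (Finset (Fin m))} (h : CondS3 m K) :
    ∃ t : Fin 7 → Finset (Fin m), (∀ p, t p ∉ K) ∧
      (∀ p q, p ≠ q → t p ∩ t q ∩ t (lf p q) = ∅) := by
  rcases h with h | h | h | h | h
  · obtain ⟨τ1, τ2, τ3, τ4, τ5, τ6, τ7, hmem, hpw, h124, h135, h167, h236, h257, h347, h456⟩ := h
    refine ⟨fun p => sel7 τ1 τ2 τ3 τ4 τ5 τ6 τ7 (gC1 p), fun p => ?_, fun p q hpq => ?_⟩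
    · have hn : ∀ l : Fin 7, sel7 τ1 τ2 τ3 τ4 τ5 τ6 τ7 l ∉ K := by
        intro l; fin_cases l
        · exact (hmem τ1 (by simp)).1
        · exact (hmem τ2 (by simp)).1
        · exact (hmem τ3 (by simp)).1
        · exact (hmem τ4 (by simp)).1
        · exact (hmem τ5 (by simp)).1
        · exact (hmem τ6 (by simp)).1
        · exact (hmem τ7 (by simp)).1
      exact hn (gC1 p)
    · rcases case1_dec p q hpq with ⟨a1, a2, a3⟩ | ⟨a1, a2, a3⟩ | ⟨a1, a2, a3⟩ | ⟨a1, a2, a3⟩ | ⟨a1, a2, a3⟩ | ⟨a1, a2, a3⟩ | ⟨a1, a2, a3⟩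
      · exact tri_from3 h124 (cv (sel7 τ1 τ2 τ3 τ4 τ5 τ6 τ7) a1) (cv (sel7 τ1 τ2 τ3 τ4 τ5 τ6 τ7) a2) (cv (sel7 τ1 τ2 τ3 τ4 τ5 τ6 τ7) a3)
      · exact tri_from3 h135 (cv (sel7 τ1 τ2 τ3 τ4 τ5 τ6 τ7) a1) (cv (sel7 τ1 τ2 τ3 τ4 τ5 τ6 τ7) a2) (cv (sel7 τ1 τ2 τ3 τ4 τ5 τ6 τ7) a3)
      · exact tri_from3 h167 (cv (sel7 τ1 τ2 τ3 τ4 τ5 τ6 τ7) a1) (cv (sel7 τ1 τ2 τ3 τ4 τ5 τ6 τ7) a2) (cv (sel7 τ1 τ2 τ3 τ4 τ5 τ6 τ7) a3)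
      · exact tri_from3 h236 (cv (sel7 τ1 τ2 τ3 τ4 τ5 τ6 τ7) a1) (cv (sel7 τ1 τ2 τ3 τ4 τ5 τ6 τ7) a2) (cv (sel7 τ1 τ2 τ3 τ4 τ5 τ6 τ7) a3)
      · exact tri_from3 h257 (cv (sel7 τ1 τ2 τ3 τ4 τ5 τ6 τ7) a1) (cv (sel7 τ1 τ2 τ3 τ4 τ5 τ6 τ7) a2) (cv (sel7 τ1 τ2 τ3 τ4 τ5 τ6 τ7) a3)
      · exact tri_from3 h347 (cv (sel7 τ1 τ2 τ3 τ4 τ5 τ6 τ7) a1) (cv (sel7 τ1 τ2 τ3 τ4 τ5 τ6 τ7) a2) (cv (sel7 τ1 τ2 τ3 τ4 τ5 τ6 τ7) a3)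
      · exact tri_from3 h456 (cv (sel7 τ1 τ2 τ3 τ4 τ5 τ6 τ7) a1) (cv (sel7 τ1 τ2 τ3 τ4 τ5 τ6 τ7) a2) (cv (sel7 τ1 τ2 τ3 τ4 τ5 τ6 τ7) a3)
  · obtain ⟨τ1, τ2, τ3, τ4, τ5, τ6, hmem, hpw, e13, h124, h125, h146, h156, h236, h345⟩ := h
    refine ⟨fun p => sel6 τ1 τ2 τ3 τ4 τ5 τ6 (gC2 p), fun p => ?_, fun p q hpq => ?_⟩
    · have hn : ∀ l : Fin 6, sel6 τ1 τ2 τ3 τ4 τ5 τ6 l ∉ K := by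
        intro l; fin_cases l
        · exact (hmem τ1 (by simp)).1
        · exact (hmem τ2 (by simp)).1
        · exact (hmem τ3 (by simp)).1
        · exact (hmem τ4 (by simp)).1
        · exact (hmem τ5 (by simp)).1
        · exact (hmem τ6 (by simp)).1
      exact hn (gC2 p)
    · rcases case2_dec p q hpq with ⟨a1, a2⟩ | ⟨a1, a2, a3⟩ | ⟨a1, a2, a3⟩ | ⟨a1, a2, a3⟩ | ⟨a1, a2, a3⟩ | ⟨a1, a2, a3⟩ | ⟨a1, a2, a3⟩
      · exact tri_from2 e13 (cv (sel6 τ1 τ2 τ3 τ4 τ5 τ6) a1) (cv (sel6 τ1 τ2 τ3 τ4 τ5 τ6) a2)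
      · exact tri_from3 h124 (cv (sel6 τ1 τ2 τ3 τ4 τ5 τ6) a1) (cv (sel6 τ1 τ2 τ3 τ4 τ5 τ6) a2) (cv (sel6 τ1 τ2 τ3 τ4 τ5 τ6) a3)
      · exact tri_from3 h125 (cv (sel6 τ1 τ2 τ3 τ4 τ5 τ6) a1) (cv (sel6 τ1 τ2 τ3 τ4 τ5 τ6) a2) (cv (sel6 τ1 τ2 τ3 τ4 τ5 τ6) a3)
      · exact tri_from3 h146 (cv (sel6 τ1 τ2 τ3 τ4 τ5 τ6) a1) (cv (sel6 τ1 τ2 τ3 τ4 τ5 τ6) a2) (cv (sel6 τ1 τ2 τ3 τ4 τ5 τ6) a3)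
      · exact tri_from3 h156 (cv (sel6 τ1 τ2 τ3 τ4 τ5 τ6) a1) (cv (sel6 τ1 τ2 τ3 τ4 τ5 τ6) a2) (cv (sel6 τ1 τ2 τ3 τ4 τ5 τ6) a3)
      · exact tri_from3 h236 (cv (sel6 τ1 τ2 τ3 τ4 τ5 τ6) a1) (cv (sel6 τ1 τ2 τ3 τ4 τ5 τ6) a2) (cv (sel6 τ1 τ2 τ3 τ4 τ5 τ6) a3)
      · exact tri_from3 h345 (cv (sel6 τ1 τ2 τ3 τ4 τ5 τ6) a1) (cv (sel6 τ1 τ2 τ3 τ4 τ5 τ6) a2) (cv (sel6 τ1 τ2 τ3 τ4 τ5 τ6) a3)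
  · obtain ⟨τ1, τ2, τ3, τ4, τ5, hmem, hpw, e12, e15, h134, h235, h245⟩ := h
    refine ⟨fun p => sel5 τ1 τ2 τ3 τ4 τ5 (gC3 p), fun p => ?_, fun p q hpq => ?_⟩
    · have hn : ∀ l : Fin 5, sel5 τ1 τ2 τ3 τ4 τ5 l ∉ K := by
        intro l; fin_cases l
        · exact (hmem τ1 (by simp)).1
        · exact (hmem τ2 (by simp)).1
        · exact (hmem τ3 (by simp)).1
        · exact (hmem τ4 (by simp)).1
        · exact (hmem τ5 (by simp)).1
      exact hn (gC3 p)
    · rcases case3_dec p q hpq with ⟨a1, a2⟩ | ⟨a1, a2⟩ | ⟨a1, a2, a3⟩ | ⟨a1, a2, a3⟩ | ⟨a1, a2, a3⟩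
      · exact tri_from2 e12 (cv (sel5 τ1 τ2 τ3 τ4 τ5) a1) (cv (sel5 τ1 τ2 τ3 τ4 τ5) a2)
      · exact tri_from2 e15 (cv (sel5 τ1 τ2 τ3 τ4 τ5) a1) (cv (sel5 τ1 τ2 τ3 τ4 τ5) a2)
      · exact tri_from3 h134 (cv (sel5 τ1 τ2 τ3 τ4 τ5) a1) (cv (sel5 τ1 τ2 τ3 τ4 τ5) a2) (cv (sel5 τ1 τ2 τ3 τ4 τ5) a3)
      · exact tri_from3 h235 (cv (sel5 τ1 τ2 τ3 τ4 τ5) a1) (cv (sel5 τ1 τ2 τ3 τ4 τ5) a2) (cv (sel5 τ1 τ2 τ3 τ4 τ5) a3)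
      · exact tri_from3 h245 (cv (sel5 τ1 τ2 τ3 τ4 τ5) a1) (cv (sel5 τ1 τ2 τ3 τ4 τ5) a2) (cv (sel5 τ1 τ2 τ3 τ4 τ5) a3)
  · obtain ⟨τ1, τ2, τ3, τ4, hmem, hpw, hu, h234⟩ := h
    have e12 : τ1 ∩ τ2 = ∅ := empty_of_sub hu
      (Finset.inter_subset_inter subset_rfl
        (Finset.Subset.trans Finset.subset_union_left Finset.subset_union_left))
    have e13 : τ1 ∩ τ3 = ∅ := empty_of_sub hu
      (Finset.inter_subset_inter subset_rfl
        (Finset.Subset.trans Finset.subset_union_right Finset.subset_union_left))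
    have e14 : τ1 ∩ τ4 = ∅ := empty_of_sub hu
      (Finset.inter_subset_inter subset_rfl Finset.subset_union_right)
    refine ⟨fun p => sel4 τ1 τ2 τ3 τ4 (gC4 p), fun p => ?_, fun p q hpq => ?_⟩
    · have hn : ∀ l : Fin 4, sel4 τ1 τ2 τ3 τ4 l ∉ K := by
        intro l; fin_cases l
        · exact (hmem τ1 (by simp)).1
        · exact (hmem τ2 (by simp)).1
        · exact (hmem τ3 (by simp)).1
        · exact (hmem τ4 (by simp)).1
      exact hn (gC4 p)
    · rcases case4_dec p q hpq with ⟨a1, a2⟩ | ⟨a1, a2⟩ | ⟨a1, a2⟩ | ⟨a1, a2, a3⟩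
      · exact tri_from2 e12 (cv (sel4 τ1 τ2 τ3 τ4) a1) (cv (sel4 τ1 τ2 τ3 τ4) a2)
      · exact tri_from2 e13 (cv (sel4 τ1 τ2 τ3 τ4) a1) (cv (sel4 τ1 τ2 τ3 τ4) a2)
      · exact tri_from2 e14 (cv (sel4 τ1 τ2 τ3 τ4) a1) (cv (sel4 τ1 τ2 τ3 τ4) a2)
      · exact tri_from3 h234 (cv (sel4 τ1 τ2 τ3 τ4) a1) (cv (sel4 τ1 τ2 τ3 τ4) a2) (cv (sel4 τ1 τ2 τ3 τ4) a3)
  · obtain ⟨τ1, τ2, τ3, hmem, hpw, e12, e13, e23⟩ := h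
    refine ⟨fun p => sel3 τ1 τ2 τ3 (gC5 p), fun p => ?_, fun p q hpq => ?_⟩
    · have hn : ∀ l : Fin 3, sel3 τ1 τ2 τ3 l ∉ K := by
        intro l; fin_cases l
        · exact (hmem τ1 (by simp)).1
        · exact (hmem τ2 (by simp)).1
        · exact (hmem τ3 (by simp)).1
      exact hn (gC5 p)
    · rcases case5_dec p q hpq with ⟨a1, a2⟩ | ⟨a1, a2⟩ | ⟨a1, a2⟩
      · exact tri_from2 e12 (cv (sel3 τ1 τ2 τ3) a1) (cv (sel3 τ1 τ2 τ3) a2)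
      · exact tri_from2 e13 (cv (sel3 τ1 τ2 τ3) a1) (cv (sel3 τ1 τ2 τ3) a2)
      · exact tri_from2 e23 (cv (sel3 τ1 τ2 τ3) a1) (cv (sel3 τ1 τ2 τ3) a2)

/-! ### more Fano decide facts -/

lemma nd_x_y : ∀ a b k : Fin 7, a ≠ b → k ≠ a → k ≠ b → k ≠ lf a b →
    a ≠ b := by decide
lemma nd_x_z : ∀ a b k : Fin 7, a ≠ b → k ≠ a → k ≠ b → k ≠ lf a b →
    a ≠ lf a b := by decide
lemma nd_x_k : ∀ a b k : Fin 7, a ≠ b → k ≠ a → k ≠ b → k ≠ lf a b →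
    a ≠ k := by decide
lemma nd_x_xc : ∀ a b k : Fin 7, a ≠ b → k ≠ a → k ≠ b → k ≠ lf a b →
    a ≠ lf a k := by decide
lemma nd_x_yc : ∀ a b k : Fin 7, a ≠ b → k ≠ a → k ≠ b → k ≠ lf a b →
    a ≠ lf b k := by decide
lemma nd_x_zc : ∀ a b k : Fin 7, a ≠ b → k ≠ a → k ≠ b → k ≠ lf a b →
    a ≠ lf (lf a b) k := by decide
lemma nd_y_z : ∀ a b k : Fin 7, a ≠ b → k ≠ a → k ≠ b → k ≠ lf a b →
    b ≠ lf a b := by decide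
lemma nd_y_k : ∀ a b k : Fin 7, a ≠ b → k ≠ a → k ≠ b → k ≠ lf a b →
    b ≠ k := by decide
lemma nd_y_xc : ∀ a b k : Fin 7, a ≠ b → k ≠ a → k ≠ b → k ≠ lf a b →
    b ≠ lf a k := by decide
lemma nd_y_yc : ∀ a b k : Fin 7, a ≠ b → k ≠ a → k ≠ b → k ≠ lf a b →
    b ≠ lf b k := by decide
lemma nd_y_zc : ∀ a b k : Fin 7, a ≠ b → k ≠ a → k ≠ b → k ≠ lf a b →
    b ≠ lf (lf a b) k := by decide
lemma nd_z_k : ∀ a b k : Fin 7, a ≠ b → k ≠ a → k ≠ b → k ≠ lf a b →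
    lf a b ≠ k := by decide
lemma nd_z_xc : ∀ a b k : Fin 7, a ≠ b → k ≠ a → k ≠ b → k ≠ lf a b →
    lf a b ≠ lf a k := by decide
lemma nd_z_yc : ∀ a b k : Fin 7, a ≠ b → k ≠ a → k ≠ b → k ≠ lf a b →
    lf a b ≠ lf b k := by decide
lemma nd_z_zc : ∀ a b k : Fin 7, a ≠ b → k ≠ a → k ≠ b → k ≠ lf a b →
    lf a b ≠ lf (lf a b) k := by decide
lemma nd_k_xc : ∀ a b k : Fin 7, a ≠ b → k ≠ a → k ≠ b → k ≠ lf a b →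
    k ≠ lf a k := by decide
lemma nd_k_yc : ∀ a b k : Fin 7, a ≠ b → k ≠ a → k ≠ b → k ≠ lf a b →
    k ≠ lf b k := by decide
lemma nd_k_zc : ∀ a b k : Fin 7, a ≠ b → k ≠ a → k ≠ b → k ≠ lf a b →
    k ≠ lf (lf a b) k := by decide
lemma nd_xc_yc : ∀ a b k : Fin 7, a ≠ b → k ≠ a → k ≠ b → k ≠ lf a b →
    lf a k ≠ lf b k := by decide
lemma nd_xc_zc : ∀ a b k : Fin 7, a ≠ b → k ≠ a → k ≠ b → k ≠ lf a b →
    lf a k ≠ lf (lf a b) k := by decide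
lemma nd_yc_zc : ∀ a b k : Fin 7, a ≠ b → k ≠ a → k ≠ b → k ≠ lf a b →
    lf b k ≠ lf (lf a b) k := by decide

lemma gp3a' : ∀ a b k : Fin 7, a ≠ b → k ≠ a → k ≠ b → k ≠ lf a b →
    lf b (lf a k) = lf (lf a b) k := by decide
lemma dE5 : ∀ a b k : Fin 7, a ≠ b → k ≠ a → k ≠ b → k ≠ lf a b →
    lf k (lf a k) = a := by decide
lemma dE6 : ∀ a b k : Fin 7, a ≠ b → k ≠ a → k ≠ b → k ≠ lf a b →
    lf k (lf b k) = b := by decide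
lemma dE7 : ∀ a b k : Fin 7, a ≠ b → k ≠ a → k ≠ b → k ≠ lf a b →
    lf k (lf (lf a b) k) = lf a b := by decide
lemma tri_ne1 : ∀ a b c : Fin 7, a ≠ b → a ≠ c → b ≠ c → lf a b ≠ lf a c := by decide
lemma tri_ne2 : ∀ a b c : Fin 7, a ≠ b → a ≠ c → b ≠ c → lf a b ≠ lf b c := by decide
lemma tri_ne3 : ∀ a b c : Fin 7, a ≠ b → a ≠ c → b ≠ c → lf a c ≠ lf b c := by decide

/-! ### Constructors for the five configurations -/

section dones
variable {m : ℕ} {K : Set (Finset (Fin m))}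

lemma done5 (hK : IsSimplicialComplex m K) {A B C : Finset (Fin m)}
    (h1 : MinimalNonSimplex m K A) (h2 : MinimalNonSimplex m K B) (h3 : MinimalNonSimplex m K C)
    (e12 : A ∩ B = ∅) (e13 : A ∩ C = ∅) (e23 : B ∩ C = ∅) : CondS3 m K := by
  have n12 : A ≠ B := ne_of_disj (mns_nonempty hK h1) e12
  have n13 : A ≠ C := ne_of_disj (mns_nonempty hK h1) e13
  have n23 : B ≠ C := ne_of_disj (mns_nonempty hK h2) e23
  refine Or.inr (Or.inr (Or.inr (Or.inr ⟨A, B, C, ?_, ?_, e12, e13, e23⟩)))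
  · intro τ hτ
    simp only [List.mem_cons, List.not_mem_nil, or_false] at hτ
    rcases hτ with rfl | rfl | rfl <;> assumption
  · simp only [List.pairwise_cons, List.mem_cons, List.not_mem_nil, or_false,
      List.mem_singleton, List.Pairwise.nil, and_true]
    refine ⟨?_, ?_, ?_⟩
    · rintro τ (rfl | rfl) <;> assumption
    · rintro τ rfl; assumption
    · exact fun _ h => h.elim

lemma done4 (hK : IsSimplicialComplex m K) {A B C D : Finset (Fin m)}
    (h1 : MinimalNonSimplex m K A) (h2 : MinimalNonSimplex m K B)
    (h3 : MinimalNonSimplex m K C) (h4 : MinimalNonSimplex m K D)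
    (e12 : A ∩ B = ∅) (e13 : A ∩ C = ∅) (e14 : A ∩ D = ∅)
    (htr : B ∩ C ∩ D = ∅)
    (n23 : B ≠ C) (n24 : B ≠ D) (n34 : C ≠ D) : CondS3 m K := by
  have n12 : A ≠ B := ne_of_disj (mns_nonempty hK h1) e12
  have n13 : A ≠ C := ne_of_disj (mns_nonempty hK h1) e13
  have n14 : A ≠ D := ne_of_disj (mns_nonempty hK h1) e14
  have hu : A ∩ (B ∪ C ∪ D) = ∅ := by
    rw [Finset.inter_union_distrib_left, Finset.inter_union_distrib_left, e12, e13, e14]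
    simp
  refine Or.inr (Or.inr (Or.inr (Or.inl ⟨A, B, C, D, ?_, ?_, hu, htr⟩)))
  · intro τ hτ
    simp only [List.mem_cons, List.not_mem_nil, or_false] at hτ
    rcases hτ with rfl | rfl | rfl | rfl <;> assumption
  · simp only [List.pairwise_cons, List.mem_cons, List.not_mem_nil, or_false,
      List.mem_singleton, List.Pairwise.nil, and_true]
    refine ⟨?_, ?_, ?_, ?_⟩
    · rintro τ (rfl | rfl | rfl) <;> assumption
    · rintro τ (rfl | rfl) <;> assumption
    · rintro τ rfl; assumption
    · exact fun _ h => h.elim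

lemma done3 (hK : IsSimplicialComplex m K) {A B C D E : Finset (Fin m)}
    (h1 : MinimalNonSimplex m K A) (h2 : MinimalNonSimplex m K B)
    (h3 : MinimalNonSimplex m K C) (h4 : MinimalNonSimplex m K D)
    (h5 : MinimalNonSimplex m K E)
    (e12 : A ∩ B = ∅) (e15 : A ∩ E = ∅)
    (h134 : A ∩ C ∩ D = ∅) (h235 : B ∩ C ∩ E = ∅) (h245 : B ∩ D ∩ E = ∅)
    (n13 : A ≠ C) (n14 : A ≠ D) (n23 : B ≠ C) (n24 : B ≠ D) (n25 : B ≠ E)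
    (n34 : C ≠ D) (n35 : C ≠ E) (n45 : D ≠ E) : CondS3 m K := by
  have n12 : A ≠ B := ne_of_disj (mns_nonempty hK h1) e12
  have n15 : A ≠ E := ne_of_disj (mns_nonempty hK h1) e15
  refine Or.inr (Or.inr (Or.inl ⟨A, B, C, D, E, ?_, ?_, e12, e15, h134, h235, h245⟩))
  · intro τ hτ
    simp only [List.mem_cons, List.not_mem_nil, or_false] at hτ
    rcases hτ with rfl | rfl | rfl | rfl | rfl <;> assumption
  · simp only [List.pairwise_cons, List.mem_cons, List.not_mem_nil, or_false,
      List.mem_singleton, List.Pairwise.nil, and_true]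
    refine ⟨?_, ?_, ?_, ?_, ?_⟩
    · rintro τ (rfl | rfl | rfl | rfl) <;> assumption
    · rintro τ (rfl | rfl | rfl) <;> assumption
    · rintro τ (rfl | rfl) <;> assumption
    · rintro τ rfl; assumption
    · exact fun _ h => h.elim

lemma done2 (hK : IsSimplicialComplex m K) {A B C D E F : Finset (Fin m)}
    (h1 : MinimalNonSimplex m K A) (h2 : MinimalNonSimplex m K B)
    (h3 : MinimalNonSimplex m K C) (h4 : MinimalNonSimplex m K D)
    (h5 : MinimalNonSimplex m K E) (h6 : MinimalNonSimplex m K F)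
    (e13 : A ∩ C = ∅)
    (h124 : A ∩ B ∩ D = ∅) (h125 : A ∩ B ∩ E = ∅) (h146 : A ∩ D ∩ F = ∅)
    (h156 : A ∩ E ∩ F = ∅) (h236 : B ∩ C ∩ F = ∅) (h345 : C ∩ D ∩ E = ∅)
    (n12 : A ≠ B) (n14 : A ≠ D) (n15 : A ≠ E) (n16 : A ≠ F)
    (n23 : B ≠ C) (n24 : B ≠ D) (n25 : B ≠ E) (n26 : B ≠ F)
    (n34 : C ≠ D) (n35 : C ≠ E) (n36 : C ≠ F)
    (n45 : D ≠ E) (n46 : D ≠ F) (n56 : E ≠ F) : CondS3 m K := by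
  have n13 : A ≠ C := ne_of_disj (mns_nonempty hK h1) e13
  refine Or.inr (Or.inl ⟨A, B, C, D, E, F, ?_, ?_, e13, h124, h125, h146, h156, h236, h345⟩)
  · intro τ hτ
    simp only [List.mem_cons, List.not_mem_nil, or_false] at hτ
    rcases hτ with rfl | rfl | rfl | rfl | rfl | rfl <;> assumption
  · simp only [List.pairwise_cons, List.mem_cons, List.not_mem_nil, or_false,
      List.mem_singleton, List.Pairwise.nil, and_true]
    refine ⟨?_, ?_, ?_, ?_, ?_, ?_⟩
    · rintro τ (rfl | rfl | rfl | rfl | rfl) <;> assumption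
    · rintro τ (rfl | rfl | rfl | rfl) <;> assumption
    · rintro τ (rfl | rfl | rfl) <;> assumption
    · rintro τ (rfl | rfl) <;> assumption
    · rintro τ rfl; assumption
    · exact fun _ h => h.elim

lemma done1 {A B C D E F G : Finset (Fin m)}
    (h1 : MinimalNonSimplex m K A) (h2 : MinimalNonSimplex m K B)
    (h3 : MinimalNonSimplex m K C) (h4 : MinimalNonSimplex m K D)
    (h5 : MinimalNonSimplex m K E) (h6 : MinimalNonSimplex m K F)
    (h7 : MinimalNonSimplex m K G)
    (h124 : A ∩ B ∩ D = ∅) (h135 : A ∩ C ∩ E = ∅) (h167 : A ∩ F ∩ G = ∅)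
    (h236 : B ∩ C ∩ F = ∅) (h257 : B ∩ E ∩ G = ∅) (h347 : C ∩ D ∩ G = ∅)
    (h456 : D ∩ E ∩ F = ∅)
    (n12 : A ≠ B) (n13 : A ≠ C) (n14 : A ≠ D) (n15 : A ≠ E) (n16 : A ≠ F) (n17 : A ≠ G)
    (n23 : B ≠ C) (n24 : B ≠ D) (n25 : B ≠ E) (n26 : B ≠ F) (n27 : B ≠ G)
    (n34 : C ≠ D) (n35 : C ≠ E) (n36 : C ≠ F) (n37 : C ≠ G)
    (n45 : D ≠ E) (n46 : D ≠ F) (n47 : D ≠ G)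
    (n56 : E ≠ F) (n57 : E ≠ G) (n67 : F ≠ G) : CondS3 m K := by
  refine Or.inl ⟨A, B, C, D, E, F, G, ?_, ?_, h124, h135, h167, h236, h257, h347, h456⟩
  · intro τ hτ
    simp only [List.mem_cons, List.not_mem_nil, or_false] at hτ
    rcases hτ with rfl | rfl | rfl | rfl | rfl | rfl | rfl <;> assumption
  · simp only [List.pairwise_cons, List.mem_cons, List.not_mem_nil, or_false,
      List.mem_singleton, List.Pairwise.nil, and_true]
    refine ⟨?_, ?_, ?_, ?_, ?_, ?_, ?_⟩
    · rintro τ (rfl | rfl | rfl | rfl | rfl | rfl) <;> assumption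
    · rintro τ (rfl | rfl | rfl | rfl | rfl) <;> assumption
    · rintro τ (rfl | rfl | rfl | rfl) <;> assumption
    · rintro τ (rfl | rfl | rfl) <;> assumption
    · rintro τ (rfl | rfl) <;> assumption
    · rintro τ rfl; assumption
    · exact fun _ h => h.elim

end dones
/-! ### The forward combinatorial analysis -/

lemma caseA {m : ℕ} {K : Set (Finset (Fin m))} (hK : IsSimplicialComplex m K)
    (t : Fin 7 → Finset (Fin m)) (hmns : ∀ p, MinimalNonSimplex m K (t p))
    (hline : ∀ p q, p ≠ q → t p ∩ t q ∩ t (lf p q) = ∅)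
    {p1 p2 p3 : Fin 7} (h12 : p1 ≠ p2) (h13 : p1 ≠ p3) (h23 : p2 ≠ p3)
    (e2 : t p1 = t p2) (e3 : t p1 = t p3) : CondS3 m K := by
  have hne : ∀ p, t p ≠ ∅ := fun p => mns_nonempty hK (hmns p)
  have poe : ∀ p q, p ≠ q → t p = t q → t p ∩ t (lf p q) = ∅ := by
    intro p q hpq he
    have h := hline p q hpq
    rw [← he, Finset.inter_self] at h
    exact h
  by_cases hl : p3 = lf p1 p2
  · exfalso
    have h := hline p1 p2 h12
    rw [← e2, ← hl, ← e3, Finset.inter_self, Finset.inter_self] at h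
    exact hne p1 h
  · have huv : lf (lf p1 p2) (lf p1 p3) = lf p2 p3 := gptri p1 p2 p3 h12 h13 h23 hl
    have hus : lf (lf p1 p2) (lf p2 p3) = lf p1 p3 :=
      gp3f p1 p2 p3 h12 (Ne.symm h13) (Ne.symm h23) hl
    have hvs : lf (lf p1 p3) (lf p2 p3) = lf p1 p2 :=
      gp3c p1 p2 p3 h12 (Ne.symm h13) (Ne.symm h23) hl
    have nuv : lf p1 p2 ≠ lf p1 p3 := tri_ne1 p1 p2 p3 h12 h13 h23
    have nus : lf p1 p2 ≠ lf p2 p3 := tri_ne2 p1 p2 p3 h12 h13 h23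
    have nvs : lf p1 p3 ≠ lf p2 p3 := tri_ne3 p1 p2 p3 h12 h13 h23
    have hXu : t p1 ∩ t (lf p1 p2) = ∅ := poe p1 p2 h12 e2
    have hXv : t p1 ∩ t (lf p1 p3) = ∅ := poe p1 p3 h13 e3
    have hXs : t p1 ∩ t (lf p2 p3) = ∅ := by
      have h := poe p2 p3 h23 (e2.symm.trans e3)
      rwa [← e2] at h
    by_cases q1 : t (lf p1 p2) = t (lf p1 p3)
    · have h := poe _ _ nuv q1
      rw [huv] at h
      exact done5 hK (hmns p1) (hmns (lf p1 p2)) (hmns (lf p2 p3)) hXu hXs h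
    by_cases q2 : t (lf p1 p2) = t (lf p2 p3)
    · have h := poe _ _ nus q2
      rw [hus] at h
      exact done5 hK (hmns p1) (hmns (lf p1 p2)) (hmns (lf p1 p3)) hXu hXv h
    by_cases q3 : t (lf p1 p3) = t (lf p2 p3)
    · have h := poe _ _ nvs q3
      rw [hvs] at h
      exact done5 hK (hmns p1) (hmns (lf p1 p2)) (hmns (lf p1 p3)) hXu hXv (disj_symm h)
    · have htr : t (lf p1 p2) ∩ t (lf p1 p3) ∩ t (lf p2 p3) = ∅ := by
        have h := hline _ _ nuv
        rwa [huv] at h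
      exact done4 hK (hmns p1) (hmns _) (hmns _) (hmns _) hXu hXv hXs htr q1 q2 q3
lemma comb_fwd {m : ℕ} {K : Set (Finset (Fin m))} (hK : IsSimplicialComplex m K)
    (t : Fin 7 → Finset (Fin m)) (hmns : ∀ p, MinimalNonSimplex m K (t p))
    (hline : ∀ p q, p ≠ q → t p ∩ t q ∩ t (lf p q) = ∅) : CondS3 m K := by
  have hne : ∀ p, t p ≠ ∅ := fun p => mns_nonempty hK (hmns p)
  have poe : ∀ p q, p ≠ q → t p = t q → t p ∩ t (lf p q) = ∅ := by
    intro p q hpq he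
    have h := hline p q hpq
    rw [← he, Finset.inter_self] at h
    exact h
  by_cases hcol : ∃ p q : Fin 7, p ≠ q ∧ t p = t q
  case neg =>
    push_neg at hcol
    have c1 : t 3 ∩ t 1 ∩ t 5 = ∅ := by
      have h := hline 3 1 (by decide); rwa [(by decide : lf 3 1 = 5)] at h
    have c2 : t 3 ∩ t 0 ∩ t 4 = ∅ := by
      have h := hline 3 0 (by decide); rwa [(by decide : lf 3 0 = 4)] at h
    have c3 : t 3 ∩ t 2 ∩ t 6 = ∅ := by
      have h := hline 3 2 (by decide); rwa [(by decide : lf 3 2 = 6)] at h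
    have c4 : t 1 ∩ t 0 ∩ t 2 = ∅ := by
      have h := hline 1 0 (by decide); rwa [(by decide : lf 1 0 = 2)] at h
    have c5 : t 1 ∩ t 4 ∩ t 6 = ∅ := by
      have h := hline 1 4 (by decide); rwa [(by decide : lf 1 4 = 6)] at h
    have c6 : t 0 ∩ t 5 ∩ t 6 = ∅ := by
      have h := hline 0 5 (by decide); rwa [(by decide : lf 0 5 = 6)] at h
    have c7 : t 5 ∩ t 4 ∩ t 2 = ∅ := by
      have h := hline 5 4 (by decide); rwa [(by decide : lf 5 4 = 2)] at h
    exact done1 (hmns 3) (hmns 1) (hmns 0) (hmns 5) (hmns 4) (hmns 2) (hmns 6)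
      c1 c2 c3 c4 c5 c6 c7
      (hcol 3 1 (by decide)) (hcol 3 0 (by decide)) (hcol 3 5 (by decide))
      (hcol 3 4 (by decide)) (hcol 3 2 (by decide)) (hcol 3 6 (by decide))
      (hcol 1 0 (by decide)) (hcol 1 5 (by decide)) (hcol 1 4 (by decide))
      (hcol 1 2 (by decide)) (hcol 1 6 (by decide))
      (hcol 0 5 (by decide)) (hcol 0 4 (by decide)) (hcol 0 2 (by decide))
      (hcol 0 6 (by decide))
      (hcol 5 4 (by decide)) (hcol 5 2 (by decide)) (hcol 5 6 (by decide))
      (hcol 4 2 (by decide)) (hcol 4 6 (by decide))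
      (hcol 2 6 (by decide))
  case pos =>
  obtain ⟨x, y, hxy, hexy⟩ := hcol
  by_cases h3f : ∃ p q r : Fin 7, p ≠ q ∧ p ≠ r ∧ q ≠ r ∧ t p = t q ∧ t p = t r
  · obtain ⟨p1, p2, p3, a1, a2, a3, b1, b2⟩ := h3f
    exact caseA hK t hmns hline a1 a2 a3 b1 b2
  push_neg at h3f
  obtain ⟨k, hk1, hk2, hk3⟩ := exists_k x y hxy
  have nxk : x ≠ k := nd_x_k x y k hxy hk1 hk2 hk3
  have nxxc : x ≠ lf x k := nd_x_xc x y k hxy hk1 hk2 hk3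
  have nxyc : x ≠ lf y k := nd_x_yc x y k hxy hk1 hk2 hk3
  have nxzc : x ≠ lf (lf x y) k := nd_x_zc x y k hxy hk1 hk2 hk3
  have nyk : y ≠ k := nd_y_k x y k hxy hk1 hk2 hk3
  have nyxc : y ≠ lf x k := nd_y_xc x y k hxy hk1 hk2 hk3
  have nyyc : y ≠ lf y k := nd_y_yc x y k hxy hk1 hk2 hk3
  have nyzc : y ≠ lf (lf x y) k := nd_y_zc x y k hxy hk1 hk2 hk3
  have nzk : lf x y ≠ k := nd_z_k x y k hxy hk1 hk2 hk3
  have nzxc : lf x y ≠ lf x k := nd_z_xc x y k hxy hk1 hk2 hk3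
  have nzyc : lf x y ≠ lf y k := nd_z_yc x y k hxy hk1 hk2 hk3
  have nzzc : lf x y ≠ lf (lf x y) k := nd_z_zc x y k hxy hk1 hk2 hk3
  have nkxc : k ≠ lf x k := nd_k_xc x y k hxy hk1 hk2 hk3
  have nkyc : k ≠ lf y k := nd_k_yc x y k hxy hk1 hk2 hk3
  have nkzc : k ≠ lf (lf x y) k := nd_k_zc x y k hxy hk1 hk2 hk3
  have nxcyc : lf x k ≠ lf y k := nd_xc_yc x y k hxy hk1 hk2 hk3
  have nxczc : lf x k ≠ lf (lf x y) k := nd_xc_zc x y k hxy hk1 hk2 hk3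
  have nyczc : lf y k ≠ lf (lf x y) k := nd_yc_zc x y k hxy hk1 hk2 hk3
  have L1 : t x ∩ t (lf x y) = ∅ := poe x y hxy hexy
  have L2 : t x ∩ t k ∩ t (lf x k) = ∅ := hline x k nxk
  have L3 : t x ∩ t (lf y k) ∩ t (lf (lf x y) k) = ∅ := by
    have h := hline x (lf y k) nxyc
    rwa [gp3a x y k hxy hk1 hk2 hk3] at h
  have L4 : t x ∩ t k ∩ t (lf y k) = ∅ := by
    have h := hline y k nyk
    rwa [← hexy] at h
  have L5 : t x ∩ t (lf x k) ∩ t (lf (lf x y) k) = ∅ := by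
    have h := hline y (lf x k) nyxc
    rwa [gp3a' x y k hxy hk1 hk2 hk3, ← hexy] at h
  have L6 : t (lf x y) ∩ t k ∩ t (lf (lf x y) k) = ∅ := hline (lf x y) k nzk
  have L7 : t (lf x y) ∩ t (lf x k) ∩ t (lf y k) = ∅ := by
    have h := hline (lf x y) (lf x k) nzxc
    rwa [gp3b x y k hxy hk1 hk2 hk3] at h
  have nAZ : t x ≠ t (lf x y) := ne_of_disj (hne x) L1
  have nAC : t x ≠ t k := h3f x y k hxy nxk nyk hexy
  have nAP : t x ≠ t (lf x k) := h3f x y (lf x k) hxy nxxc nyxc hexy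
  have nAQ : t x ≠ t (lf y k) := h3f x y (lf y k) hxy nxyc nyyc hexy
  have nAR : t x ≠ t (lf (lf x y) k) := h3f x y (lf (lf x y) k) hxy nxzc nyzc hexy
  by_cases e1 : t (lf x y) = t k
  · have F1 : t (lf x y) ∩ t (lf (lf x y) k) = ∅ := poe (lf x y) k nzk e1
    have nZP : t (lf x y) ≠ t (lf x k) := h3f (lf x y) k (lf x k) nzk nzxc nkxc e1
    have nZQ : t (lf x y) ≠ t (lf y k) := h3f (lf x y) k (lf y k) nzk nzyc nkyc e1
    have nZR : t (lf x y) ≠ t (lf (lf x y) k) := h3f (lf x y) k (lf (lf x y) k) nzk nzzc nkzc e1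
    by_cases q8 : t (lf x k) = t (lf y k)
    · have F8 : t (lf x k) ∩ t (lf x y) = ∅ := by
        have h := poe (lf x k) (lf y k) nxcyc q8
        rwa [gp3c x y k hxy hk1 hk2 hk3] at h
      have nPR : t (lf x k) ≠ t (lf (lf x y) k) := h3f (lf x k) (lf y k) (lf (lf x y) k) nxcyc nxczc nyczc q8
      exact done4 hK (hmns (lf x y)) (hmns x) (hmns (lf x k)) (hmns (lf (lf x y) k))
        (disj_symm L1) (disj_symm F8) F1 L5 nAP nAR nPR
    by_cases q9 : t (lf x k) = t (lf (lf x y) k)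
    · have F9 : t (lf x k) ∩ t x = ∅ := by
        have h := poe (lf x k) (lf (lf x y) k) nxczc q9
        rwa [gp3d x y k hxy hk1 hk2 hk3, ← hexy] at h
      have F1' : t (lf x y) ∩ t (lf x k) = ∅ := by rwa [← q9] at F1
      exact done5 hK (hmns x) (hmns (lf x y)) (hmns (lf x k)) L1 (disj_symm F9) F1'
    by_cases q10 : t (lf y k) = t (lf (lf x y) k)
    · have F10 : t (lf y k) ∩ t x = ∅ := by
        have h := poe (lf y k) (lf (lf x y) k) nyczc q10
        rwa [gp3e x y k hxy hk1 hk2 hk3] at h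
      have F1'' : t (lf x y) ∩ t (lf y k) = ∅ := by rwa [← q10] at F1
      exact done5 hK (hmns x) (hmns (lf x y)) (hmns (lf y k)) L1 (disj_symm F10) F1''
    · exact done3 hK (hmns (lf x y)) (hmns x) (hmns (lf x k)) (hmns (lf y k))
        (hmns (lf (lf x y) k)) (disj_symm L1) F1 L7 L5 L3 nZP nZQ nAP nAQ nAR q8 q9 q10
  by_cases e2 : t (lf x y) = t (lf x k)
  · have F2 : t (lf x y) ∩ t (lf y k) = ∅ := by
      have h := poe (lf x y) (lf x k) nzxc e2
      rwa [gp3b x y k hxy hk1 hk2 hk3] at h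
    have nZC : t (lf x y) ≠ t k := h3f (lf x y) (lf x k) k nzxc nzk (Ne.symm nkxc) e2
    have nZQ' : t (lf x y) ≠ t (lf y k) := h3f (lf x y) (lf x k) (lf y k) nzxc nzyc nxcyc e2
    have nZR' : t (lf x y) ≠ t (lf (lf x y) k) := h3f (lf x y) (lf x k) (lf (lf x y) k) nzxc nzzc nxczc e2
    by_cases q6 : t k = t (lf y k)
    · have F6 : t k ∩ t x = ∅ := by
        have h := poe k (lf y k) nkyc q6
        rwa [dE6 x y k hxy hk1 hk2 hk3, ← hexy] at h
      have F2' : t (lf x y) ∩ t k = ∅ := by rwa [← q6] at F2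
      exact done5 hK (hmns x) (hmns (lf x y)) (hmns k) L1 (disj_symm F6) F2'
    by_cases q7 : t k = t (lf (lf x y) k)
    · have F7 : t k ∩ t (lf x y) = ∅ := by
        have h := poe k (lf (lf x y) k) nkzc q7
        rwa [dE7 x y k hxy hk1 hk2 hk3] at h
      have htr : t x ∩ t (lf y k) ∩ t k = ∅ :=
        tri_from3 L4 (Or.inl rfl) (Or.inr (Or.inr rfl)) (Or.inr (Or.inl rfl))
      exact done4 hK (hmns (lf x y)) (hmns x) (hmns (lf y k)) (hmns k)
        (disj_symm L1) F2 (disj_symm F7) htr nAQ nAC (fun h => q6 h.symm)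
    by_cases q10 : t (lf y k) = t (lf (lf x y) k)
    · have F10 : t (lf y k) ∩ t x = ∅ := by
        have h := poe (lf y k) (lf (lf x y) k) nyczc q10
        rwa [gp3e x y k hxy hk1 hk2 hk3] at h
      exact done5 hK (hmns x) (hmns (lf x y)) (hmns (lf y k)) L1 (disj_symm F10) F2
    · have h245 : t x ∩ t (lf (lf x y) k) ∩ t (lf y k) = ∅ :=
        tri_from3 L3 (Or.inl rfl) (Or.inr (Or.inr rfl)) (Or.inr (Or.inl rfl))
      exact done3 hK (hmns (lf x y)) (hmns x) (hmns k) (hmns (lf (lf x y) k)) (hmns (lf y k))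
        (disj_symm L1) F2 L6 L4 h245 nZC nZR' nAC nAR nAQ q7 q6 (fun h => q10 h.symm)
  by_cases e3 : t (lf x y) = t (lf y k)
  · have F3 : t (lf x y) ∩ t (lf x k) = ∅ := by
      have h := poe (lf x y) (lf y k) nzyc e3
      rwa [gp3f x y k hxy hk1 hk2 hk3] at h
    have nZC : t (lf x y) ≠ t k := h3f (lf x y) (lf y k) k nzyc nzk (Ne.symm nkyc) e3
    have nZR' : t (lf x y) ≠ t (lf (lf x y) k) := h3f (lf x y) (lf y k) (lf (lf x y) k) nzyc nzzc nyczc e3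
    by_cases q5 : t k = t (lf x k)
    · have F5 : t k ∩ t x = ∅ := by
        have h := poe k (lf x k) nkxc q5
        rwa [dE5 x y k hxy hk1 hk2 hk3] at h
      have F3' : t (lf x y) ∩ t k = ∅ := by rwa [← q5] at F3
      exact done5 hK (hmns x) (hmns (lf x y)) (hmns k) L1 (disj_symm F5) F3'
    by_cases q7 : t k = t (lf (lf x y) k)
    · have F7 : t k ∩ t (lf x y) = ∅ := by
        have h := poe k (lf (lf x y) k) nkzc q7
        rwa [dE7 x y k hxy hk1 hk2 hk3] at h
      have htr : t x ∩ t (lf x k) ∩ t k = ∅ :=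
        tri_from3 L2 (Or.inl rfl) (Or.inr (Or.inr rfl)) (Or.inr (Or.inl rfl))
      exact done4 hK (hmns (lf x y)) (hmns x) (hmns (lf x k)) (hmns k)
        (disj_symm L1) F3 (disj_symm F7) htr nAP nAC (fun h => q5 h.symm)
    by_cases q9 : t (lf x k) = t (lf (lf x y) k)
    · have F9 : t (lf x k) ∩ t x = ∅ := by
        have h := poe (lf x k) (lf (lf x y) k) nxczc q9
        rwa [gp3d x y k hxy hk1 hk2 hk3, ← hexy] at h
      exact done5 hK (hmns x) (hmns (lf x y)) (hmns (lf x k)) L1 (disj_symm F9) F3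
    · have h245 : t x ∩ t (lf (lf x y) k) ∩ t (lf x k) = ∅ :=
        tri_from3 L5 (Or.inl rfl) (Or.inr (Or.inr rfl)) (Or.inr (Or.inl rfl))
      exact done3 hK (hmns (lf x y)) (hmns x) (hmns k) (hmns (lf (lf x y) k)) (hmns (lf x k))
        (disj_symm L1) F3 L6 L2 h245 nZC nZR' nAC nAR nAP q7 q5 (fun h => q9 h.symm)
  by_cases e4 : t (lf x y) = t (lf (lf x y) k)
  · have F4 : t (lf x y) ∩ t k = ∅ := by
      have h := poe (lf x y) (lf (lf x y) k) nzzc e4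
      rwa [lf_invol (lf x y) k nzk] at h
    have nZP' : t (lf x y) ≠ t (lf x k) := h3f (lf x y) (lf (lf x y) k) (lf x k) nzzc nzxc (Ne.symm nxczc) e4
    have nZQ' : t (lf x y) ≠ t (lf y k) := h3f (lf x y) (lf (lf x y) k) (lf y k) nzzc nzyc (Ne.symm nyczc) e4
    by_cases q5 : t k = t (lf x k)
    · have F5 : t k ∩ t x = ∅ := by
        have h := poe k (lf x k) nkxc q5
        rwa [dE5 x y k hxy hk1 hk2 hk3] at h
      exact done5 hK (hmns x) (hmns (lf x y)) (hmns k) L1 (disj_symm F5) F4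
    by_cases q6 : t k = t (lf y k)
    · have F6 : t k ∩ t x = ∅ := by
        have h := poe k (lf y k) nkyc q6
        rwa [dE6 x y k hxy hk1 hk2 hk3, ← hexy] at h
      exact done5 hK (hmns x) (hmns (lf x y)) (hmns k) L1 (disj_symm F6) F4
    by_cases q8 : t (lf x k) = t (lf y k)
    · have F8 : t (lf x k) ∩ t (lf x y) = ∅ := by
        have h := poe (lf x k) (lf y k) nxcyc q8
        rwa [gp3c x y k hxy hk1 hk2 hk3] at h
      exact done4 hK (hmns (lf x y)) (hmns x) (hmns k) (hmns (lf x k))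
        (disj_symm L1) F4 (disj_symm F8) L2 nAC nAP (fun h => q5 h)
    · have h235 : t x ∩ t (lf x k) ∩ t k = ∅ :=
        tri_from3 L2 (Or.inl rfl) (Or.inr (Or.inr rfl)) (Or.inr (Or.inl rfl))
      have h245 : t x ∩ t (lf y k) ∩ t k = ∅ :=
        tri_from3 L4 (Or.inl rfl) (Or.inr (Or.inr rfl)) (Or.inr (Or.inl rfl))
      exact done3 hK (hmns (lf x y)) (hmns x) (hmns (lf x k)) (hmns (lf y k)) (hmns k)
        (disj_symm L1) F4 L7 h235 h245 nZP' nZQ' nAP nAQ nAC q8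
        (fun h => q5 h.symm) (fun h => q6 h.symm)
  by_cases e5 : t k = t (lf x k)
  · have F5 : t k ∩ t x = ∅ := by
      have h := poe k (lf x k) nkxc e5
      rwa [dE5 x y k hxy hk1 hk2 hk3] at h
    have nCZ : t k ≠ t (lf x y) := h3f k (lf x k) (lf x y) nkxc (Ne.symm nzk) (Ne.symm nzxc) e5
    have nCQ : t k ≠ t (lf y k) := h3f k (lf x k) (lf y k) nkxc nkyc nxcyc e5
    have nCR : t k ≠ t (lf (lf x y) k) := h3f k (lf x k) (lf (lf x y) k) nkxc nkzc nxczc e5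
    have L7' : t (lf x y) ∩ t k ∩ t (lf y k) = ∅ := by rwa [← e5] at L7
    by_cases q10 : t (lf y k) = t (lf (lf x y) k)
    · have F10 : t (lf y k) ∩ t x = ∅ := by
        have h := poe (lf y k) (lf (lf x y) k) nyczc q10
        rwa [gp3e x y k hxy hk1 hk2 hk3] at h
      exact done4 hK (hmns x) (hmns (lf x y)) (hmns k) (hmns (lf y k))
        L1 (disj_symm F5) (disj_symm F10) L7' (fun h => nCZ h.symm) e3 nCQ
    · have h235 : t k ∩ t (lf y k) ∩ t (lf x y) = ∅ :=
        tri_from3 L7' (Or.inr (Or.inr rfl)) (Or.inl rfl) (Or.inr (Or.inl rfl))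
      have h245 : t k ∩ t (lf (lf x y) k) ∩ t (lf x y) = ∅ :=
        tri_from3 L6 (Or.inr (Or.inr rfl)) (Or.inl rfl) (Or.inr (Or.inl rfl))
      exact done3 hK (hmns x) (hmns k) (hmns (lf y k)) (hmns (lf (lf x y) k)) (hmns (lf x y))
        (disj_symm F5) L1 L3 h235 h245 nAQ nAR nCQ nCR nCZ q10
        (fun h => e3 h.symm) (fun h => e4 h.symm)
  by_cases e6 : t k = t (lf y k)
  · have F6 : t k ∩ t x = ∅ := by
      have h := poe k (lf y k) nkyc e6
      rwa [dE6 x y k hxy hk1 hk2 hk3, ← hexy] at h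
    have nCZ : t k ≠ t (lf x y) := h3f k (lf y k) (lf x y) nkyc (Ne.symm nzk) (Ne.symm nzyc) e6
    have nCP : t k ≠ t (lf x k) := h3f k (lf y k) (lf x k) nkyc nkxc (Ne.symm nxcyc) e6
    have nCR : t k ≠ t (lf (lf x y) k) := h3f k (lf y k) (lf (lf x y) k) nkyc nkzc nyczc e6
    have L7'' : t (lf x y) ∩ t (lf x k) ∩ t k = ∅ := by rwa [← e6] at L7
    by_cases q9 : t (lf x k) = t (lf (lf x y) k)
    · have F9 : t (lf x k) ∩ t x = ∅ := by
        have h := poe (lf x k) (lf (lf x y) k) nxczc q9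
        rwa [gp3d x y k hxy hk1 hk2 hk3, ← hexy] at h
      have htr : t (lf x y) ∩ t k ∩ t (lf x k) = ∅ :=
        tri_from3 L7'' (Or.inl rfl) (Or.inr (Or.inr rfl)) (Or.inr (Or.inl rfl))
      exact done4 hK (hmns x) (hmns (lf x y)) (hmns k) (hmns (lf x k))
        L1 (disj_symm F6) (disj_symm F9) htr (fun h => nCZ h.symm) e2 nCP
    · have h235 : t k ∩ t (lf x k) ∩ t (lf x y) = ∅ :=
        tri_from3 L7'' (Or.inr (Or.inr rfl)) (Or.inr (Or.inl rfl)) (Or.inl rfl)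
      have h245 : t k ∩ t (lf (lf x y) k) ∩ t (lf x y) = ∅ :=
        tri_from3 L6 (Or.inr (Or.inr rfl)) (Or.inl rfl) (Or.inr (Or.inl rfl))
      exact done3 hK (hmns x) (hmns k) (hmns (lf x k)) (hmns (lf (lf x y) k)) (hmns (lf x y))
        (disj_symm F6) L1 L5 h235 h245 nAP nAR nCP nCR nCZ q9
        (fun h => e2 h.symm) (fun h => e4 h.symm)
  by_cases e7 : t k = t (lf (lf x y) k)
  · have F7 : t k ∩ t (lf x y) = ∅ := by
      have h := poe k (lf (lf x y) k) nkzc e7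
      rwa [dE7 x y k hxy hk1 hk2 hk3] at h
    have nCP : t k ≠ t (lf x k) := h3f k (lf (lf x y) k) (lf x k) nkzc nkxc (Ne.symm nxczc) e7
    have nCQ : t k ≠ t (lf y k) := h3f k (lf (lf x y) k) (lf y k) nkzc nkyc (Ne.symm nyczc) e7
    by_cases q8 : t (lf x k) = t (lf y k)
    · have F8 : t (lf x k) ∩ t (lf x y) = ∅ := by
        have h := poe (lf x k) (lf y k) nxcyc q8
        rwa [gp3c x y k hxy hk1 hk2 hk3] at h
      exact done4 hK (hmns (lf x y)) (hmns x) (hmns k) (hmns (lf x k))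
        (disj_symm L1) (disj_symm F7) (disj_symm F8) L2 nAC nAP nCP
    · have h235 : t x ∩ t (lf x k) ∩ t k = ∅ :=
        tri_from3 L2 (Or.inl rfl) (Or.inr (Or.inr rfl)) (Or.inr (Or.inl rfl))
      have h245 : t x ∩ t (lf y k) ∩ t k = ∅ :=
        tri_from3 L4 (Or.inl rfl) (Or.inr (Or.inr rfl)) (Or.inr (Or.inl rfl))
      exact done3 hK (hmns (lf x y)) (hmns x) (hmns (lf x k)) (hmns (lf y k)) (hmns k)
        (disj_symm L1) (disj_symm F7) L7 h235 h245 e2 e3 nAP nAQ nAC q8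
        (fun h => nCP h.symm) (fun h => nCQ h.symm)
  by_cases e8 : t (lf x k) = t (lf y k)
  · have F8 : t (lf x k) ∩ t (lf x y) = ∅ := by
      have h := poe (lf x k) (lf y k) nxcyc e8
      rwa [gp3c x y k hxy hk1 hk2 hk3] at h
    have nPR : t (lf x k) ≠ t (lf (lf x y) k) := h3f (lf x k) (lf y k) (lf (lf x y) k) nxcyc nxczc nyczc e8
    have nPC : t (lf x k) ≠ t k := h3f (lf x k) (lf y k) k nxcyc (Ne.symm nkxc) (Ne.symm nkyc) e8
    have h245 : t x ∩ t (lf (lf x y) k) ∩ t (lf x k) = ∅ :=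
      tri_from3 L5 (Or.inl rfl) (Or.inr (Or.inr rfl)) (Or.inr (Or.inl rfl))
    exact done3 hK (hmns (lf x y)) (hmns x) (hmns k) (hmns (lf (lf x y) k)) (hmns (lf x k))
      (disj_symm L1) (disj_symm F8) L6 L2 h245 e1 e4 nAC nAR nAP e7
      (fun h => nPC h.symm) (fun h => nPR h.symm)
  by_cases e9 : t (lf x k) = t (lf (lf x y) k)
  · have F9 : t (lf x k) ∩ t x = ∅ := by
      have h := poe (lf x k) (lf (lf x y) k) nxczc e9
      rwa [gp3d x y k hxy hk1 hk2 hk3, ← hexy] at h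
    have nPQ : t (lf x k) ≠ t (lf y k) := h3f (lf x k) (lf (lf x y) k) (lf y k) nxczc nxcyc (Ne.symm nyczc) e9
    have nPC : t (lf x k) ≠ t k := h3f (lf x k) (lf (lf x y) k) k nxczc (Ne.symm nkxc) (Ne.symm nkzc) e9
    have L6' : t (lf x y) ∩ t k ∩ t (lf x k) = ∅ := by rwa [← e9] at L6
    have h245 : t (lf x y) ∩ t (lf y k) ∩ t (lf x k) = ∅ :=
      tri_from3 L7 (Or.inl rfl) (Or.inr (Or.inr rfl)) (Or.inr (Or.inl rfl))
    exact done3 hK (hmns x) (hmns (lf x y)) (hmns k) (hmns (lf y k)) (hmns (lf x k))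
      L1 (disj_symm F9) L4 L6' h245 nAC nAQ e1 e3 e2 e6
      (fun h => nPC h.symm) (fun h => nPQ h.symm)
  by_cases e10 : t (lf y k) = t (lf (lf x y) k)
  · have F10 : t (lf y k) ∩ t x = ∅ := by
      have h := poe (lf y k) (lf (lf x y) k) nyczc e10
      rwa [gp3e x y k hxy hk1 hk2 hk3] at h
    have L6'' : t (lf x y) ∩ t k ∩ t (lf y k) = ∅ := by rwa [← e10] at L6
    exact done3 hK (hmns x) (hmns (lf x y)) (hmns k) (hmns (lf x k)) (hmns (lf y k))
      L1 (disj_symm F10) L2 L6'' L7 nAC nAP e1 e2 e3 e5 e6 e8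
  · have h236 : t k ∩ t (lf x y) ∩ t (lf (lf x y) k) = ∅ :=
      tri_from3 L6 (Or.inr (Or.inl rfl)) (Or.inl rfl) (Or.inr (Or.inr rfl))
    exact done2 hK (hmns x) (hmns k) (hmns (lf x y)) (hmns (lf x k)) (hmns (lf y k))
      (hmns (lf (lf x y) k))
      L1 L2 L4 L5 L3 h236 L7
      nAC nAP nAQ nAR (fun h => e1 h.symm) e5 e6 e7 e2 e3 e4 e8 e9 e10

/-! ### Main theorem -/

/-- `s(K) ≥ 3` iff condition (S3) holds. -/
theorem stmt_15 (m : ℕ) (K : Set (Finset (Fin m))) (hK : IsSimplicialComplex m K) :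
    (∃ S : Matrix (Fin m) (Fin 3) ℤ, CondA m 3 K S) ↔ CondS3 m K := by
  constructor
  · rintro ⟨S, hS⟩
    obtain ⟨t, hmns, hline⟩ := main_fwd hK S hS
    exact comb_fwd hK t hmns hline
  · intro h
    obtain ⟨t, hnk, hline⟩ := comb_rev h
    exact main_rev hK t hnk hline
end

section
/- s(K) = 2 (i.e., there exists an m×2 integer matrix satisfying condition (A) for K but no m×3 integer matrix satisfying condition (A) for K) if and only if condition (S2) holds and condition (S3) fails, where (S2) is: there exist pairwise distinct τ₁, τ₂, τ₃ ∈ N(K) with τ₁∩τ₂∩τ₃ = ∅, or distinct τ₁, τ₂ ∈ N(K) with τ₁∩τ₂ = ∅; and (S3) is: N(K) contains one of the following configurations of pairwise distinct elements: (1) τ₁,…,τ₇ with τ₁∩τ₂∩τ₄ = ∅, τ₁∩τ₃∩τ₅ = ∅, τ₁∩τ₆∩τ₇ = ∅, τ₂∩τ₃∩τ₆ = ∅, τ₂∩τ₅∩τ₇ = ∅, τ₃∩τ₄∩τ₇ = ∅, τ₄∩τ₅∩τ₆ = ∅; (2) τ₁,…,τ₆ with τ₁∩τ₃ = ∅, τ₁∩τ₂∩τ₄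 = ∅, τ₁∩τ₂∩τ₅ = ∅, τ₁∩τ₄∩τ₆ = ∅, τ₁∩τ₅∩τ₆ = ∅, τ₂∩τ₃∩τ₆ = ∅, τ₃∩τ₄∩τ₅ = ∅; (3) τ₁,…,τ₅ with τ₁∩τ₂ = ∅, τ₁∩τ₅ = ∅, τ₁∩τ₃∩τ₄ = ∅, τ₂∩τ₃∩τ₅ = ∅, τ₂∩τ₄∩τ₅ = ∅; (4) τ₁,…,τ₄ with τ₁ ∩ (τ₂ ∪ τ₃ ∪ τ₄) = ∅ and τ₂∩τ₃∩τ₄ = ∅; (5) τ₁, τ₂, τ₃ with τ₁∩τ₂ = τ₁∩τ₃ = τ₂∩τ₃ = ∅. -/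
namespace Buch

set_option maxRecDepth 10000
set_option synthInstance.maxSize 2000

variable {m : ℕ} {K : Set (Finset (Fin m))}

/-! ### basic complex lemmas -/

theorem mns_nonempty (hK : IsSimplicialComplex m K) {τ : Finset (Fin m)}
    (h : MinimalNonSimplex m K τ) : τ.Nonempty := by
  rcases Finset.eq_empty_or_nonempty τ with rfl | h'
  · exact absurd hK.1 h.1
  · exact h'

theorem exists_mns_of_not_mem {σ : Finset (Fin m)} (h : σ ∉ K) :
    ∃ τ, MinimalNonSimplex m K τ ∧ τ ⊆ σ := by
  induction σ using Finset.strongInduction with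
  | _ σ ih =>
    by_cases hall : ∀ ρ ⊂ σ, ρ ∈ K
    · exact ⟨σ, ⟨h, hall⟩, Finset.Subset.refl σ⟩
    · push_neg at hall
      obtain ⟨ρ, hρs, hρ⟩ := hall
      obtain ⟨τ, hτ, hsub⟩ := ih ρ hρs hρ
      exact ⟨τ, hτ, hsub.trans hρs.subset⟩

theorem condA_forward {k : ℕ} {S : Matrix (Fin m) (Fin k) ℤ} (hA : CondA m k K S)
    (D : Finset (Fin m))
    (hns : Submodule.span ℤ ((fun i => S i) '' {i : Fin m | i ∈ D}) ≠ ⊤) :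
    ∃ τ, MinimalNonSimplex m K τ ∧ ∀ i ∈ τ, i ∉ D := by
  have hσ : Dᶜ ∉ K := by
    intro hmem
    have := hA Dᶜ hmem
    rw [show {i : Fin m | i ∉ Dᶜ} = {i : Fin m | i ∈ D} by ext i; simp] at this
    exact hns this
  obtain ⟨τ, hτ, hsub⟩ := exists_mns_of_not_mem hσ
  exact ⟨τ, hτ, fun i hi => by simpa using hsub hi⟩

theorem condA_of_transversal (hK : IsSimplicialComplex m K) {k : ℕ}
    (S : Matrix (Fin m) (Fin k) ℤ)
    (h : ∀ C : Set (Fin m), (∀ τ, MinimalNonSimplex m K τ → ∃ i ∈ τ, i ∈ C) →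
      Submodule.span ℤ ((fun i => S i) '' C) = ⊤) : CondA m k K S := by
  intro σ hσ
  apply h
  intro τ hτ
  by_contra hc
  push_neg at hc
  have hsub : τ ⊆ σ := fun i hi => by
    by_contra hns; exact hc i hi hns
  exact hτ.1 (hK.2 σ hσ τ hsub)

/-! ### linear algebra helpers -/

open Matrix in
theorem rows_span_top {n : ℕ} (A : Matrix (Fin n) (Fin n) ℤ) (h : IsUnit A.det) :
    Submodule.span ℤ (Set.range fun i => A i) = ⊤ := by
  rw [eq_top_iff]
  intro x _
  have hx : x = (x ᵥ* A⁻¹) ᵥ* A := by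
    rw [Matrix.vecMul_vecMul, Matrix.nonsing_inv_mul A h, Matrix.vecMul_one]
  have hsum : (x ᵥ* A⁻¹) ᵥ* A = ∑ i, (x ᵥ* A⁻¹) i • A i := by
    ext j
    simp [Matrix.vecMul, dotProduct, Finset.sum_apply]
  rw [hx, hsum]
  exact Submodule.sum_mem _ fun i _ =>
    Submodule.smul_mem _ _ (Submodule.subset_span ⟨i, rfl⟩)

def red {k : ℕ} (x : Fin k → ℤ) : Fin k → ZMod 2 := fun j => (x j : ZMod 2)

theorem red_add {k : ℕ} (x y : Fin k → ℤ) : red (x + y) = red x + red y := by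
  funext j; simp [red]

theorem red_smul {k : ℕ} (c : ℤ) (x : Fin k → ℤ) : red (c • x) = (c : ZMod 2) • red x := by
  funext j; simp [red]

theorem span_red_top {k : ℕ} {s : Set (Fin k → ℤ)}
    (h : Submodule.span ℤ s = ⊤) :
    Submodule.span (ZMod 2) (red '' s) = ⊤ := by
  rw [eq_top_iff]
  intro y _
  have key : ∀ x : Fin k → ℤ, x ∈ Submodule.span ℤ s →
      red x ∈ Submodule.span (ZMod 2) (red '' s) := by
    intro x hxmem
    induction hxmem using Submodule.span_induction with
    | mem z hz => exact Submodule.subset_span ⟨z, hz, rfl⟩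
    | zero => rw [show red (0 : Fin k → ℤ) = 0 by funext j; simp [red]]; exact Submodule.zero_mem _
    | add a b _ _ ha hb => rw [red_add]; exact Submodule.add_mem _ ha hb
    | smul c a _ ha => rw [red_smul]; exact Submodule.smul_mem _ _ ha
  have hy : ∀ j, ∃ b : ℤ, (b : ZMod 2) = y j := fun j => ⟨((y j).val : ℤ), by
    have : ∀ a : ZMod 2, ((a.val : ℤ) : ZMod 2) = a := by decide
    exact this (y j)⟩
  choose x hx using hy
  have hxy : red x = y := by funext j; exact hx j
  exact hxy ▸ key x (h ▸ Submodule.mem_top)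

/-! ### 𝔽₂ dot products -/

def dot {k : ℕ} (w v : Fin k → ZMod 2) : ZMod 2 := ∑ j, w j * v j

theorem dot_add_left {k : ℕ} (w w' v : Fin k → ZMod 2) :
    dot (w + w') v = dot w v + dot w' v := by
  simp [dot, add_mul, Finset.sum_add_distrib]

def dotL {k : ℕ} (w : Fin k → ZMod 2) : (Fin k → ZMod 2) →ₗ[ZMod 2] ZMod 2 where
  toFun v := dot w v
  map_add' x y := by simp [dot, mul_add, Finset.sum_add_distrib]
  map_smul' c x := by simp [dot, Finset.mul_sum]; ring_nf; simp [mul_assoc, mul_comm, mul_left_comm]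

theorem not_span_of_dot_zero {k : ℕ} (w : Fin k → ZMod 2) (hw : w ≠ 0)
    (s : Set (Fin k → ZMod 2)) (hs : ∀ v ∈ s, dot w v = 0) :
    Submodule.span (ZMod 2) s ≠ ⊤ := by
  intro htop
  obtain ⟨j₀, hj₀⟩ : ∃ j, w j ≠ 0 := by
    by_contra hc; push_neg at hc; exact hw (funext fun j => hc j)
  have hle : Submodule.span (ZMod 2) s ≤ LinearMap.ker (dotL w) :=
    Submodule.span_le.mpr fun v hv => by simp only [SetLike.mem_coe, LinearMap.mem_ker]; exact hs v hv
  rw [htop, top_le_iff] at hle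
  have : dotL w (Pi.single j₀ 1) = 0 := by
    rw [LinearMap.ker_eq_top.mp hle]; rfl
  rw [show dotL w (Pi.single j₀ 1) = w j₀ by
    simp [dotL, dot, Pi.single_apply, Finset.sum_ite_eq']] at this
  exact hj₀ this

/-- The set of rows whose mod-2 reduction is killed by `w` does not span `ℤᵏ`,
so (under CondA) some minimal non-simplex avoids it. -/
theorem exists_mns_dot_one {k : ℕ} {S : Matrix (Fin m) (Fin k) ℤ} (hA : CondA m k K S)
    (w : Fin k → ZMod 2) (hw : w ≠ 0) :
    ∃ τ, MinimalNonSimplex m K τ ∧ ∀ i ∈ τ, dot w (red (S i)) = 1 := by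
  classical
  set D : Finset (Fin m) := Finset.univ.filter (fun i => dot w (red (S i)) = 0) with hD
  have hns : Submodule.span ℤ ((fun i => S i) '' {i : Fin m | i ∈ D}) ≠ ⊤ := by
    intro htop
    have h2 := span_red_top htop
    rw [Set.image_image] at h2
    refine not_span_of_dot_zero w hw _ ?_ h2
    rintro v ⟨i, hi, rfl⟩
    simp only [hD, Finset.mem_coe, Finset.mem_filter, Set.mem_setOf_eq] at hi
    exact hi.2
  obtain ⟨τ, hτ, havoid⟩ := condA_forward hA D hns
  refine ⟨τ, hτ, fun i hi => ?_⟩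
  have := havoid i hi
  simp only [hD, Finset.mem_filter, Finset.mem_univ, true_and] at this
  rcases eq_or_ne (dot w (red (S i))) 0 with h0 | h1
  · exact absurd h0 this
  · have : ∀ a : ZMod 2, a ≠ 0 → a = 1 := by decide
    exact this _ h1


/-! ### the Buchstaber condition for k = 2 -/

def u1 : Fin 2 → ℤ := ![1, 0]
def u2 : Fin 2 → ℤ := ![0, 1]
def u3 : Fin 2 → ℤ := ![1, 1]

theorem range2 (u v : Fin 2 → ℤ) : Set.range ![u, v] = {u, v} := by
  simp [Matrix.range_cons, Matrix.range_empty]; aesop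

theorem span_pair_top {u v : Fin 2 → ℤ}
    (hu : u = u1 ∨ u = u2 ∨ u = u3) (hv : v = u1 ∨ v = u2 ∨ v = u3) (huv : u ≠ v) :
    Submodule.span ℤ {u, v} = ⊤ := by
  have e : ∀ a b : Fin 2 → ℤ, (Matrix.of ![a, b]).det = a 0 * b 1 - a 1 * b 0 := fun a b => by
    simp [Matrix.det_fin_two]
  have hdet : (Matrix.of ![u, v]).det = 1 ∨ (Matrix.of ![u, v]).det = -1 := by
    rcases hu with rfl | rfl | rfl <;> rcases hv with rfl | rfl | rfl <;>
      first
        | (exact absurd rfl huv)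
        | (rw [e]; norm_num [u1, u2, u3])
  have key : IsUnit (Matrix.of ![u, v]).det := by
    rcases hdet with h | h <;> rw [h]
    · exact isUnit_one
    · exact IsUnit.neg isUnit_one
  have := rows_span_top _ key
  rwa [show (Set.range fun i => (Matrix.of ![u, v]) i) = {u, v} from range2 u v] at this

theorem matrix2_of_S2 (hK : IsSimplicialComplex m K) (h : CondS2 m K) :
    ∃ S : Matrix (Fin m) (Fin 2) ℤ, CondA m 2 K S := by
  classical
  rcases h with ⟨τ₁, τ₂, τ₃, h1, h2, h3, _, _, _, hint⟩ | ⟨τ₁, τ₂, h1, h2, _, hint⟩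
  · -- three with empty intersection
    refine ⟨Matrix.of (fun i => if i ∉ τ₁ then u1 else if i ∉ τ₂ then u2 else u3), ?_⟩
    apply condA_of_transversal hK
    intro C hC
    obtain ⟨i₁, hi₁τ, hi₁C⟩ := hC τ₁ h1
    obtain ⟨i₂, hi₂τ, hi₂C⟩ := hC τ₂ h2
    obtain ⟨i₃, hi₃τ, hi₃C⟩ := hC τ₃ h3
    set f : Fin m → Fin 2 → ℤ := fun i => if i ∉ τ₁ then u1 else if i ∉ τ₂ then u2 else u3 with hf
    have hval : ∀ i, f i = u1 ∨ f i = u2 ∨ f i = u3 := by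
      intro i; simp only [hf]; split_ifs <;> simp
    have h1v : f i₁ = u2 ∨ f i₁ = u3 := by
      by_cases hB : i₁ ∉ τ₂ <;> simp [hf, hi₁τ, hB]
    have h2v : f i₂ = u1 ∨ f i₂ = u3 := by
      by_cases hA : i₂ ∉ τ₁ <;> simp [hf, hA, hi₂τ]
    have h3v : f i₃ = u1 ∨ f i₃ = u2 := by
      by_cases hA : i₃ ∉ τ₁
      · simp [hf, hA]
      · by_cases hB : i₃ ∉ τ₂
        · simp [hf, hA, hB]
        · exfalso
          push_neg at hA hB
          have : i₃ ∈ τ₁ ∩ τ₂ ∩ τ₃ := by simp [hA, hB, hi₃τ]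
          rw [hint] at this
          simpa using this
    -- find two distinct values among C's rows
    have hone : ∃ i ∈ C, ∃ i' ∈ C, f i ≠ f i' := by
      rcases h1v with e1 | e1
      · rcases h2v with e2 | e2
        · exact ⟨i₁, hi₁C, i₂, hi₂C, by rw [e1, e2]; decide⟩
        · exact ⟨i₁, hi₁C, i₂, hi₂C, by rw [e1, e2]; decide⟩
      · rcases h2v with e2 | e2
        · exact ⟨i₁, hi₁C, i₂, hi₂C, by rw [e1, e2]; decide⟩
        · rcases h3v with e3 | e3
          · exact ⟨i₁, hi₁C, i₃, hi₃C, by rw [e1, e3]; decide⟩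
          · exact ⟨i₁, hi₁C, i₃, hi₃C, by rw [e1, e3]; decide⟩
    obtain ⟨j, hjC, j', hj'C, hne⟩ := hone
    have hsub : ({f j, f j'} : Set (Fin 2 → ℤ)) ⊆ (fun i => (Matrix.of f) i) '' C := by
      rintro x (rfl | rfl)
      · exact ⟨j, hjC, rfl⟩
      · exact ⟨j', hj'C, rfl⟩
    have htop := span_pair_top (hval j) (hval j') hne
    exact top_unique (htop ▸ Submodule.span_mono hsub)
  · -- two disjoint
    refine ⟨Matrix.of (fun i => if i ∈ τ₁ then u2 else u1), ?_⟩
    apply condA_of_transversal hK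
    intro C hC
    obtain ⟨i₁, hi₁τ, hi₁C⟩ := hC τ₁ h1
    obtain ⟨i₂, hi₂τ, hi₂C⟩ := hC τ₂ h2
    set f : Fin m → Fin 2 → ℤ := fun i => if i ∈ τ₁ then u2 else u1 with hf
    have e1 : f i₁ = u2 := by simp [hf, hi₁τ]
    have hi₂ : i₂ ∉ τ₁ := by
      intro hcon
      have : i₂ ∈ τ₁ ∩ τ₂ := by simp [hcon, hi₂τ]
      rw [hint] at this; simpa using this
    have e2 : f i₂ = u1 := by simp [hf, hi₂]
    have hsub : ({f i₂, f i₁} : Set (Fin 2 → ℤ)) ⊆ (fun i => (Matrix.of f) i) '' C := by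
      rintro x (rfl | rfl)
      · exact ⟨i₂, hi₂C, rfl⟩
      · exact ⟨i₁, hi₁C, rfl⟩
    have htop := span_pair_top (Or.inl e2) (Or.inr (Or.inl e1)) (by rw [e1, e2]; decide)
    exact top_unique (htop ▸ Submodule.span_mono hsub)

theorem S2_of_matrix2 (hK : IsSimplicialComplex m K)
    (h : ∃ S : Matrix (Fin m) (Fin 2) ℤ, CondA m 2 K S) : CondS2 m K := by
  obtain ⟨S, hA⟩ := h
  obtain ⟨τ₁, h1, hd1⟩ := exists_mns_dot_one hA ![1, 0] (by decide)
  obtain ⟨τ₂, h2, hd2⟩ := exists_mns_dot_one hA ![0, 1] (by decide)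
  obtain ⟨τ₃, h3, hd3⟩ := exists_mns_dot_one hA ![1, 1] (by decide)
  have hsum : ∀ v : Fin 2 → ZMod 2, dot ![1,1] v = dot ![1,0] v + dot ![0,1] v := by
    intro v
    rw [show (![1,1] : Fin 2 → ZMod 2) = ![1,0] + ![0,1] by decide, dot_add_left]
  by_cases h12 : τ₁ = τ₂
  · -- τ₁ ∩ τ₃ = ∅
    have hdisj : τ₁ ∩ τ₃ = ∅ := by
      rw [Finset.eq_empty_iff_forall_notMem]
      intro i hi
      rw [Finset.mem_inter] at hi
      have e3 := hd3 i hi.2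
      rw [hsum, hd1 i hi.1, hd2 i (h12 ▸ hi.1)] at e3
      exact absurd e3 (by decide)
    have hne : τ₁ ≠ τ₃ := by
      intro he
      rw [← he, Finset.inter_self] at hdisj
      exact (mns_nonempty hK h1).ne_empty hdisj
    exact Or.inr ⟨τ₁, τ₃, h1, h3, hne, hdisj⟩
  · by_cases h13 : τ₁ = τ₃
    · -- dot w2 = 0 on τ₁ : τ₁ ∩ τ₂ = ∅
      have hdisj : τ₁ ∩ τ₂ = ∅ := by
        rw [Finset.eq_empty_iff_forall_notMem]
        intro i hi
        rw [Finset.mem_inter] at hi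
        have e2 := hd2 i hi.2
        have := hsum (red (S i))
        rw [hd1 i hi.1, hd3 i (h13 ▸ hi.1), e2] at this
        exact absurd this (by decide)
      exact Or.inr ⟨τ₁, τ₂, h1, h2, h12, hdisj⟩
    · by_cases h23 : τ₂ = τ₃
      · have hdisj : τ₁ ∩ τ₂ = ∅ := by
          rw [Finset.eq_empty_iff_forall_notMem]
          intro i hi
          rw [Finset.mem_inter] at hi
          have := hsum (red (S i))
          rw [hd1 i hi.1, hd2 i hi.2, hd3 i (h23 ▸ hi.2)] at this
          exact absurd this (by decide)
        exact Or.inr ⟨τ₁, τ₂, h1, h2, h12, hdisj⟩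
      · have hint : τ₁ ∩ τ₂ ∩ τ₃ = ∅ := by
          rw [Finset.eq_empty_iff_forall_notMem]
          intro i hi
          simp only [Finset.mem_inter] at hi
          have := hsum (red (S i))
          rw [hd1 i hi.1.1, hd2 i hi.1.2, hd3 i hi.2] at this
          exact absurd this (by decide)
        exact Or.inl ⟨τ₁, τ₂, τ₃, h1, h2, h3, h12, h13, h23, hint⟩


/-- pairwise-disjointness fact in pointwise form -/
def D2 {m : ℕ} (x y : Finset (Fin m)) : Prop := ∀ i, i ∈ x → i ∈ y → False

/-- triple-intersection-empty fact in pointwise form -/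
def T3 {m : ℕ} (x y z : Finset (Fin m)) : Prop := ∀ i, i ∈ x → i ∈ y → i ∈ z → False

theorem D2_iff {x y : Finset (Fin m)} : x ∩ y = ∅ ↔ D2 x y := by
  rw [Finset.eq_empty_iff_forall_notMem]
  simp [D2, Finset.mem_inter]

theorem T3_iff {x y z : Finset (Fin m)} : x ∩ y ∩ z = ∅ ↔ T3 x y z := by
  rw [Finset.eq_empty_iff_forall_notMem]
  simp [T3, Finset.mem_inter]

theorem D2.t3l {x y z : Finset (Fin m)} (h : D2 x y) : T3 x z y := fun i hx _ hy => h i hx hy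
theorem D2.t3r {x y z : Finset (Fin m)} (h : D2 x y) : T3 x y z := fun i hx hy _ => h i hx hy

theorem ne_of_D2 (hK : IsSimplicialComplex m K) {x y : Finset (Fin m)}
    (hx : MinimalNonSimplex m K x) (h : D2 x y) : x ≠ y := by
  rintro rfl
  obtain ⟨i, hi⟩ := mns_nonempty hK hx
  exact h i hi hi

theorem mkCfg5 (hK : IsSimplicialComplex m K) {τ₁ τ₂ τ₃ : Finset (Fin m)}
    (h1 : MinimalNonSimplex m K τ₁) (h2 : MinimalNonSimplex m K τ₂)
    (h3 : MinimalNonSimplex m K τ₃)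
    (d12 : D2 τ₁ τ₂) (d13 : D2 τ₁ τ₃) (d23 : D2 τ₂ τ₃) : CondS3 m K := by
  refine Or.inr (Or.inr (Or.inr (Or.inr ⟨τ₁, τ₂, τ₃, ?_, ?_, ?_, ?_, ?_⟩)))
  · intro τ hτ
    simp only [List.mem_cons, List.not_mem_nil, or_false] at hτ
    rcases hτ with rfl | rfl | rfl
    exacts [h1, h2, h3]
  · have n12 := ne_of_D2 hK h1 d12
    have n13 := ne_of_D2 hK h1 d13
    have n23 := ne_of_D2 hK h2 d23
    simp only [List.pairwise_cons, List.mem_cons, List.not_mem_nil, or_false,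
      List.Pairwise.nil, and_true]
    aesop
  · exact D2_iff.mpr d12
  · exact D2_iff.mpr d13
  · exact D2_iff.mpr d23


theorem D2.symm {x y : Finset (Fin m)} (h : D2 x y) : D2 y x := fun i hy hx => h i hx hy

theorem mkCfg4 (hK : IsSimplicialComplex m K) {τ₁ τ₂ τ₃ τ₄ : Finset (Fin m)}
    (h1 : MinimalNonSimplex m K τ₁) (h2 : MinimalNonSimplex m K τ₂)
    (h3 : MinimalNonSimplex m K τ₃) (h4 : MinimalNonSimplex m K τ₄)
    (d12 : D2 τ₁ τ₂) (d13 : D2 τ₁ τ₃) (d14 : D2 τ₁ τ₄)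
    (t234 : T3 τ₂ τ₃ τ₄)
    (n23 : τ₂ ≠ τ₃) (n24 : τ₂ ≠ τ₄) (n34 : τ₃ ≠ τ₄) : CondS3 m K := by
  refine Or.inr (Or.inr (Or.inr (Or.inl ⟨τ₁, τ₂, τ₃, τ₄, ?_, ?_, ?_, T3_iff.mpr t234⟩)))
  · intro τ hτ
    simp only [List.mem_cons, List.not_mem_nil, or_false] at hτ
    rcases hτ with rfl | rfl | rfl | rfl
    exacts [h1, h2, h3, h4]
  · have n12 := ne_of_D2 hK h1 d12
    have n13 := ne_of_D2 hK h1 d13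
    have n14 := ne_of_D2 hK h1 d14
    simp only [List.pairwise_cons, List.mem_cons, List.not_mem_nil, or_false,
      List.Pairwise.nil, and_true]
    aesop
  · rw [Finset.eq_empty_iff_forall_notMem]
    intro i hi
    rw [Finset.mem_inter, Finset.mem_union, Finset.mem_union] at hi
    rcases hi.2 with (h | h) | h
    exacts [d12 i hi.1 h, d13 i hi.1 h, d14 i hi.1 h]

theorem mkCfg3 (hK : IsSimplicialComplex m K) {τ₁ τ₂ τ₃ τ₄ τ₅ : Finset (Fin m)}
    (h1 : MinimalNonSimplex m K τ₁) (h2 : MinimalNonSimplex m K τ₂)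
    (h3 : MinimalNonSimplex m K τ₃) (h4 : MinimalNonSimplex m K τ₄)
    (h5 : MinimalNonSimplex m K τ₅)
    (d12 : D2 τ₁ τ₂) (d15 : D2 τ₁ τ₅)
    (t134 : T3 τ₁ τ₃ τ₄) (t235 : T3 τ₂ τ₃ τ₅) (t245 : T3 τ₂ τ₄ τ₅)
    (n13 : τ₁ ≠ τ₃) (n14 : τ₁ ≠ τ₄) (n23 : τ₂ ≠ τ₃) (n24 : τ₂ ≠ τ₄) (n25 : τ₂ ≠ τ₅)
    (n34 : τ₃ ≠ τ₄) (n35 : τ₃ ≠ τ₅) (n45 : τ₄ ≠ τ₅) : CondS3 m K := by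
  refine Or.inr (Or.inr (Or.inl ⟨τ₁, τ₂, τ₃, τ₄, τ₅, ?_, ?_, D2_iff.mpr d12, D2_iff.mpr d15,
    T3_iff.mpr t134, T3_iff.mpr t235, T3_iff.mpr t245⟩))
  · intro τ hτ
    simp only [List.mem_cons, List.not_mem_nil, or_false] at hτ
    rcases hτ with rfl | rfl | rfl | rfl | rfl
    exacts [h1, h2, h3, h4, h5]
  · have n12 := ne_of_D2 hK h1 d12
    have n15 := ne_of_D2 hK h1 d15
    simp only [List.pairwise_cons, List.mem_cons, List.not_mem_nil, or_false,
      List.Pairwise.nil, and_true]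
    aesop

theorem mkCfg2 (hK : IsSimplicialComplex m K) {τ₁ τ₂ τ₃ τ₄ τ₅ τ₆ : Finset (Fin m)}
    (h1 : MinimalNonSimplex m K τ₁) (h2 : MinimalNonSimplex m K τ₂)
    (h3 : MinimalNonSimplex m K τ₃) (h4 : MinimalNonSimplex m K τ₄)
    (h5 : MinimalNonSimplex m K τ₅) (h6 : MinimalNonSimplex m K τ₆)
    (d13 : D2 τ₁ τ₃)
    (t124 : T3 τ₁ τ₂ τ₄) (t125 : T3 τ₁ τ₂ τ₅) (t146 : T3 τ₁ τ₄ τ₆)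
    (t156 : T3 τ₁ τ₅ τ₆) (t236 : T3 τ₂ τ₃ τ₆) (t345 : T3 τ₃ τ₄ τ₅)
    (n12 : τ₁ ≠ τ₂) (n14 : τ₁ ≠ τ₄) (n15 : τ₁ ≠ τ₅) (n16 : τ₁ ≠ τ₆)
    (n23 : τ₂ ≠ τ₃) (n24 : τ₂ ≠ τ₄) (n25 : τ₂ ≠ τ₅) (n26 : τ₂ ≠ τ₆)
    (n34 : τ₃ ≠ τ₄) (n35 : τ₃ ≠ τ₅) (n36 : τ₃ ≠ τ₆)
    (n45 : τ₄ ≠ τ₅) (n46 : τ₄ ≠ τ₆) (n56 : τ₅ ≠ τ₆) : CondS3 m K := by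
  refine Or.inr (Or.inl ⟨τ₁, τ₂, τ₃, τ₄, τ₅, τ₆, ?_, ?_, D2_iff.mpr d13,
    T3_iff.mpr t124, T3_iff.mpr t125, T3_iff.mpr t146, T3_iff.mpr t156,
    T3_iff.mpr t236, T3_iff.mpr t345⟩)
  · intro τ hτ
    simp only [List.mem_cons, List.not_mem_nil, or_false] at hτ
    rcases hτ with rfl | rfl | rfl | rfl | rfl | rfl
    exacts [h1, h2, h3, h4, h5, h6]
  · have n13 := ne_of_D2 hK h1 d13
    simp only [List.pairwise_cons, List.mem_cons, List.not_mem_nil, or_false,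
      List.Pairwise.nil, and_true]
    aesop

theorem mkCfg1 (hK : IsSimplicialComplex m K) {τ₁ τ₂ τ₃ τ₄ τ₅ τ₆ τ₇ : Finset (Fin m)}
    (h1 : MinimalNonSimplex m K τ₁) (h2 : MinimalNonSimplex m K τ₂)
    (h3 : MinimalNonSimplex m K τ₃) (h4 : MinimalNonSimplex m K τ₄)
    (h5 : MinimalNonSimplex m K τ₅) (h6 : MinimalNonSimplex m K τ₆)
    (h7 : MinimalNonSimplex m K τ₇)
    (t124 : T3 τ₁ τ₂ τ₄) (t135 : T3 τ₁ τ₃ τ₅) (t167 : T3 τ₁ τ₆ τ₇)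
    (t236 : T3 τ₂ τ₃ τ₆) (t257 : T3 τ₂ τ₅ τ₇) (t347 : T3 τ₃ τ₄ τ₇)
    (t456 : T3 τ₄ τ₅ τ₆)
    (n12 : τ₁ ≠ τ₂) (n13 : τ₁ ≠ τ₃) (n14 : τ₁ ≠ τ₄) (n15 : τ₁ ≠ τ₅) (n16 : τ₁ ≠ τ₆)
    (n17 : τ₁ ≠ τ₇) (n23 : τ₂ ≠ τ₃) (n24 : τ₂ ≠ τ₄) (n25 : τ₂ ≠ τ₅) (n26 : τ₂ ≠ τ₆)
    (n27 : τ₂ ≠ τ₇) (n34 : τ₃ ≠ τ₄) (n35 : τ₃ ≠ τ₅) (n36 : τ₃ ≠ τ₆) (n37 : τ₃ ≠ τ₇)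
    (n45 : τ₄ ≠ τ₅) (n46 : τ₄ ≠ τ₆) (n47 : τ₄ ≠ τ₇) (n56 : τ₅ ≠ τ₆) (n57 : τ₅ ≠ τ₇)
    (n67 : τ₆ ≠ τ₇) : CondS3 m K := by
  refine Or.inl ⟨τ₁, τ₂, τ₃, τ₄, τ₅, τ₆, τ₇, ?_, ?_, T3_iff.mpr t124, T3_iff.mpr t135,
    T3_iff.mpr t167, T3_iff.mpr t236, T3_iff.mpr t257, T3_iff.mpr t347, T3_iff.mpr t456⟩
  · intro τ hτ
    simp only [List.mem_cons, List.not_mem_nil, or_false] at hτ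
    rcases hτ with rfl | rfl | rfl | rfl | rfl | rfl | rfl
    exacts [h1, h2, h3, h4, h5, h6, h7]
  · simp only [List.pairwise_cons, List.mem_cons, List.not_mem_nil, or_false,
      List.Pairwise.nil, and_true]
    aesop

/-- Case: `A` coincides with one of the quadrilateral values. -/
theorem lemma_case2 (hK : IsSimplicialComplex m K) {A C E F : Finset (Fin m)}
    (hA : MinimalNonSimplex m K A) (hC : MinimalNonSimplex m K C)
    (hE : MinimalNonSimplex m K E) (hF : MinimalNonSimplex m K F)
    (dAC : D2 A C) (dAE : D2 A E) (dAF : D2 A F) (tCEF : T3 C E F) : CondS3 m K := by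
  by_cases hEF : E = F
  · have dCE : D2 C E := fun i hc he => tCEF i hc he (hEF ▸ he)
    exact mkCfg5 hK hA hC hE dAC dAE dCE
  · by_cases hCE : C = E
    · have dCF : D2 C F := fun i hc hf => tCEF i hc (hCE ▸ hc) hf
      exact mkCfg5 hK hA hC hF dAC dAF dCF
    · by_cases hCF : C = F
      · have dCE : D2 C E := fun i hc he => tCEF i hc he (hCF ▸ hc)
        exact mkCfg5 hK hA hC hE dAC dAE dCE
      · exact mkCfg4 hK hA hC hE hF dAC dAE dAF tCEF hCE hCF hEF

/-- Case: `C` coincides with one of the quadrilateral values. -/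
theorem lemma_case4 (hK : IsSimplicialComplex m K) {A C E F G : Finset (Fin m)}
    (hA : MinimalNonSimplex m K A) (hC : MinimalNonSimplex m K C)
    (hE : MinimalNonSimplex m K E) (hF : MinimalNonSimplex m K F)
    (hG : MinimalNonSimplex m K G)
    (nAE : A ≠ E) (nAF : A ≠ F) (nAG : A ≠ G)
    (dAC : D2 A C) (dCG : D2 C G)
    (tAEG : T3 A E G) (tAFG : T3 A F G) (tCEF : T3 C E F) : CondS3 m K := by
  by_cases hEF : E = F
  · have dCE : D2 C E := fun i hc he => tCEF i hc he (hEF ▸ he)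
    by_cases hEG : E = G
    · have dAE : D2 A E := fun i ha he => tAEG i ha he (hEG ▸ he)
      exact mkCfg5 hK hA hC hE dAC dAE dCE
    · exact mkCfg4 hK hC hA hE hG dAC.symm dCE dCG tAEG nAE nAG hEG
  · by_cases hEG : E = G
    · have dAE : D2 A E := fun i ha he => tAEG i ha he (hEG ▸ he)
      have dCE : D2 C E := fun i hc he => dCG i hc (hEG ▸ he)
      exact mkCfg5 hK hA hC hE dAC dAE dCE
    · by_cases hFG : F = G
      · have dAF : D2 A F := fun i ha hf => tAFG i ha hf (hFG ▸ hf)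
        have dCF : D2 C F := fun i hc hf => dCG i hc (hFG ▸ hf)
        exact mkCfg5 hK hA hC hF dAC dAF dCF
      · by_cases hCE : C = E
        · have dCF : D2 C F := fun i hc hf => tCEF i hc (hCE ▸ hc) hf
          exact mkCfg4 hK hC hA hF hG dAC.symm dCF dCG tAFG nAF nAG hFG
        · by_cases hCF : C = F
          · have dCE : D2 C E := fun i hc he => tCEF i hc he (hCF ▸ hc)
            exact mkCfg4 hK hC hA hE hG dAC.symm dCE dCG tAEG nAE nAG hEG
          · exact mkCfg3 hK hC hA hE hF hG dAC.symm dCG tCEF tAEG tAFG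
              hCE hCF nAE nAF nAG hEF hEG hFG

/-- Case: a "side" coincidence `D = E` inside the quadrilateral
(after renaming, `dAD` is derived). -/
theorem lemma_case5side (hK : IsSimplicialComplex m K) {A C D F G : Finset (Fin m)}
    (hA : MinimalNonSimplex m K A) (hC : MinimalNonSimplex m K C)
    (hD : MinimalNonSimplex m K D) (hF : MinimalNonSimplex m K F)
    (hG : MinimalNonSimplex m K G)
    (nAF : A ≠ F) (nAG : A ≠ G) (nCD : C ≠ D) (nCF : C ≠ F) (nCG : C ≠ G)
    (dAC : D2 A C) (dAD : D2 A D)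
    (tAFG : T3 A F G) (tCDG : T3 C D G) (tCDF : T3 C D F) : CondS3 m K := by
  by_cases hFG : F = G
  · have dAF : D2 A F := fun i ha hf => tAFG i ha hf (hFG ▸ hf)
    by_cases hDF : D = F
    · have dCD : D2 C D := fun i hc hd => tCDF i hc hd (hDF ▸ hd)
      exact mkCfg5 hK hA hC hD dAC dAD dCD
    · exact mkCfg4 hK hA hC hD hF dAC dAD dAF tCDF nCD nCF hDF
  · by_cases hDG : D = G
    · have dCD : D2 C D := fun i hc hd => tCDG i hc hd (hDG ▸ hd)
      exact mkCfg5 hK hA hC hD dAC dAD dCD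
    · by_cases hDF : D = F
      · have dCD : D2 C D := fun i hc hd => tCDF i hc hd (hDF ▸ hd)
        exact mkCfg5 hK hA hC hD dAC dAD dCD
      · exact mkCfg3 hK hA hC hG hF hD dAC dAD
          (fun i ha hg hf => tAFG i ha hf hg)
          (fun i hc hg hd => tCDG i hc hd hg)
          (fun i hc hf hd => tCDF i hc hd hf)
          nAG nAF nCG nCF nCD (fun h => hFG h.symm) (fun h => hDG h.symm)
          (fun h => hDF h.symm)

/-- Case: a "diagonal" coincidence `D = G` inside the quadrilateral
(`dCD` is derived). -/
theorem lemma_case5diag (hK : IsSimplicialComplex m K) {A C D E F : Finset (Fin m)}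
    (hA : MinimalNonSimplex m K A) (hC : MinimalNonSimplex m K C)
    (hD : MinimalNonSimplex m K D) (hE : MinimalNonSimplex m K E)
    (hF : MinimalNonSimplex m K F)
    (nAD : A ≠ D) (nAE : A ≠ E) (nAF : A ≠ F) (nCE : C ≠ E) (nCF : C ≠ F)
    (dAC : D2 A C) (dCD : D2 C D)
    (tADE : T3 A D E) (tADF : T3 A D F) (tCEF : T3 C E F) : CondS3 m K := by
  by_cases hEF : E = F
  · have dCE : D2 C E := fun i hc he => tCEF i hc he (hEF ▸ he)
    by_cases hDE : D = E
    · have dAD : D2 A D := fun i ha hd => tADE i ha hd (hDE ▸ hd)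
      exact mkCfg5 hK hA hC hD dAC dAD dCD
    · exact mkCfg4 hK hC hA hD hE dAC.symm dCD dCE tADE nAD nAE hDE
  · by_cases hDE : D = E
    · have dAD : D2 A D := fun i ha hd => tADE i ha hd (hDE ▸ hd)
      exact mkCfg5 hK hA hC hD dAC dAD dCD
    · by_cases hDF : D = F
      · have dAD : D2 A D := fun i ha hd => tADF i ha hd (hDF ▸ hd)
        exact mkCfg5 hK hA hC hD dAC dAD dCD
      · exact mkCfg3 hK hC hA hE hF hD dAC.symm dCD tCEF
          (fun i ha he hd => tADE i ha hd he)
          (fun i ha hf hd => tADF i ha hd hf)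
          nCE nCF nAE nAF nAD hEF (fun h => hDE h.symm) (fun h => hDF h.symm)

/-- After normalization: the first two values coincide (`A` is the common value,
`C` the value at the third point of that line, `D E F G` the quadrilateral values). -/
theorem lemma_afterNorm (hK : IsSimplicialComplex m K) {A C D E F G : Finset (Fin m)}
    (hA : MinimalNonSimplex m K A) (hC : MinimalNonSimplex m K C)
    (hD : MinimalNonSimplex m K D) (hE : MinimalNonSimplex m K E)
    (hF : MinimalNonSimplex m K F) (hG : MinimalNonSimplex m K G)
    (dAC : D2 A C)
    (tADE : T3 A D E) (tAFG : T3 A F G) (tADF : T3 A D F) (tAEG : T3 A E G)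
    (tCDG : T3 C D G) (tCEF : T3 C E F) : CondS3 m K := by
  by_cases hAD : A = D
  · exact lemma_case2 hK hA hC hE hF dAC
      (fun i ha he => tADE i ha (hAD ▸ ha) he)
      (fun i ha hf => tADF i ha (hAD ▸ ha) hf) tCEF
  · by_cases hAE : A = E
    · exact lemma_case2 hK hA hC hD hG dAC
        (fun i ha hd => tADE i ha hd (hAE ▸ ha))
        (fun i ha hg => tAEG i ha (hAE ▸ ha) hg) tCDG
    · by_cases hAF : A = F
      · exact lemma_case2 hK hA hC hD hG dAC
          (fun i ha hd => tADF i ha hd (hAF ▸ ha))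
          (fun i ha hg => tAFG i ha (hAF ▸ ha) hg) tCDG
      · by_cases hAG : A = G
        · exact lemma_case2 hK hA hC hE hF dAC
            (fun i ha he => tAEG i ha he (hAG ▸ ha))
            (fun i ha hf => tAFG i ha hf (hAG ▸ ha)) tCEF
        · by_cases hCD : C = D
          · exact lemma_case4 hK hA hC hE hF hG hAE hAF hAG dAC
              (fun i hc hg => tCDG i hc (hCD ▸ hc) hg) tAEG tAFG tCEF
          · by_cases hCE : C = E
            · exact lemma_case4 hK hA hC hD hG hF hAD hAG hAF dAC
                (fun i hc hf => tCEF i hc (hCE ▸ hc) hf) tADF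
                (fun i ha hg hf => tAFG i ha hf hg) tCDG
            · by_cases hCF : C = F
              · exact lemma_case4 hK hA hC hD hG hE hAD hAG hAE dAC
                  (fun i hc he => tCEF i hc he (hCF ▸ hc)) tADE
                  (fun i ha hg he => tAEG i ha he hg) tCDG
              · by_cases hCG : C = G
                · exact lemma_case4 hK hA hC hE hF hD hAE hAF hAD dAC
                    (fun i hc hd => tCDG i hc hd (hCG ▸ hc))
                    (fun i ha he hd => tADE i ha hd he)
                    (fun i ha hf hd => tADF i ha hd hf) tCEF
                · by_cases hDE : D = E
                  · exact lemma_case5side hK hA hC hD hF hG hAF hAG hCD hCF hCG dAC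
                      (fun i ha hd => tADE i ha hd (hDE ▸ hd)) tAFG tCDG
                      (fun i hc hd hf => tCEF i hc (hDE ▸ hd) hf)
                  · by_cases hDF : D = F
                    · exact lemma_case5side hK hA hC hD hE hG hAE hAG hCD hCE hCG dAC
                        (fun i ha hd => tADF i ha hd (hDF ▸ hd)) tAEG tCDG
                        (fun i hc hd he => tCEF i hc he (hDF ▸ hd))
                    · by_cases hEG : E = G
                      · exact lemma_case5side hK hA hC hE hD hF hAD hAF hCE hCD hCF dAC
                          (fun i ha he => tAEG i ha he (hEG ▸ he)) tADF tCEF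
                          (fun i hc he hd => tCDG i hc hd (hEG ▸ he))
                      · by_cases hFG : F = G
                        · exact lemma_case5side hK hA hC hF hD hE hAD hAE hCF hCD hCE dAC
                            (fun i ha hf => tAFG i ha hf (hFG ▸ hf)) tADE
                            (fun i hc hf he => tCEF i hc he hf)
                            (fun i hc hf hd => tCDG i hc hd (hFG ▸ hf))
                        · by_cases hDG : D = G
                          · exact lemma_case5diag hK hA hC hD hE hF hAD hAE hAF hCE hCF dAC
                              (fun i hc hd => tCDG i hc hd (hDG ▸ hd)) tADE tADF tCEF
                          · by_cases hEF : E = F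
                            · exact lemma_case5diag hK hA hC hE hG hD hAE hAG hAD hCG hCD dAC
                                (fun i hc he => tCEF i hc he (hEF ▸ he)) tAEG
                                (fun i ha he hd => tADE i ha hd he)
                                (fun i hc hg hd => tCDG i hc hd hg)
                            · exact mkCfg2 hK hA hD hC hE hF hG dAC tADE tADF tAEG tAFG
                                (fun i hd hc hg => tCDG i hc hd hg) tCEF
                                hAD hAE hAF hAG (fun h => hCD h.symm) hDE hDF hDG
                                hCE hCF hCG hEF hEG hFG

abbrev V3 := Fin 3 → ZMod 2

theorem addself : ∀ a : V3, a + a = 0 := by decide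

theorem zexists : ∀ x y : V3, ∃ z : V3, z ≠ 0 ∧ z ≠ x ∧ z ≠ y ∧ z ≠ x + y := by decide

theorem sum_ne_zero : ∀ a b : V3, a ≠ b → a + b ≠ 0 := by decide

/-- The combinatorial core: a Fano-indexed family of minimal non-simplices with the
line property yields condition (S3). -/
theorem core_fwd (hK : IsSimplicialComplex m K) (σ : V3 → Finset (Fin m))
    (hM : ∀ w : V3, w ≠ 0 → MinimalNonSimplex m K (σ w))
    (hL : ∀ w₁ w₂ w₃ : V3, w₁ ≠ 0 → w₂ ≠ 0 → w₃ ≠ 0 → w₁ + w₂ + w₃ = 0 →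
      T3 (σ w₁) (σ w₂) (σ w₃)) : CondS3 m K := by
  by_cases hinj : ∀ w w' : V3, w ≠ 0 → w' ≠ 0 → σ w = σ w' → w = w'
  · -- all seven values distinct: configuration 1
    refine mkCfg1 hK (hM ![1,0,0] (by decide)) (hM ![0,1,0] (by decide))
      (hM ![0,0,1] (by decide)) (hM ![1,1,0] (by decide)) (hM ![1,0,1] (by decide))
      (hM ![0,1,1] (by decide)) (hM ![1,1,1] (by decide))
      (hL ![1,0,0] ![0,1,0] ![1,1,0] (by decide) (by decide) (by decide) (by decide))
      (hL ![1,0,0] ![0,0,1] ![1,0,1] (by decide) (by decide) (by decide) (by decide))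
      (hL ![1,0,0] ![0,1,1] ![1,1,1] (by decide) (by decide) (by decide) (by decide))
      (hL ![0,1,0] ![0,0,1] ![0,1,1] (by decide) (by decide) (by decide) (by decide))
      (hL ![0,1,0] ![1,0,1] ![1,1,1] (by decide) (by decide) (by decide) (by decide))
      (hL ![0,0,1] ![1,1,0] ![1,1,1] (by decide) (by decide) (by decide) (by decide))
      (hL ![1,1,0] ![1,0,1] ![0,1,1] (by decide) (by decide) (by decide) (by decide))
      ?_ ?_ ?_ ?_ ?_ ?_ ?_ ?_ ?_ ?_ ?_ ?_ ?_ ?_ ?_ ?_ ?_ ?_ ?_ ?_ ?_ <;>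
      exact fun h => absurd (hinj _ _ (by decide) (by decide) h) (by decide)
  · push_neg at hinj
    obtain ⟨x, y, hx, hy, hσ, hxy⟩ := hinj
    obtain ⟨z, hz0, hzx, hzy, hzxy⟩ := zexists x y
    have hxy0 : x + y ≠ 0 := sum_ne_zero x y hxy
    have hxz0 : x + z ≠ 0 := sum_ne_zero x z (fun h => hzx h.symm)
    have hyz0 : y + z ≠ 0 := sum_ne_zero y z (fun h => hzy h.symm)
    have hxyz0 : x + y + z ≠ 0 := by
      intro h
      apply hzxy
      have := addself (x + y)
      calc z = 0 + z := (zero_add z).symm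
        _ = (x + y) + (x + y) + z := by rw [this]
        _ = (x + y) + (x + y + z) := by rw [add_assoc]
        _ = (x + y) + 0 := by rw [h]
        _ = x + y := add_zero _
    -- sum-zero facts for the seven lines through the normalized pair
    have habc : x + y + (x + y) = 0 := addself (x + y)
    have hade : x + z + (x + z) = 0 := addself (x + z)
    have hbdf : y + z + (y + z) = 0 := addself (y + z)
    have hcdg : x + y + z + (x + y + z) = 0 := addself (x + y + z)
    have hafg : x + (y + z) + (x + y + z) = 0 := by
      rw [show x + (y + z) + (x + y + z) = (x + x) + (y + y) + (z + z) from by abel]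
      simp [addself]
    have hbeg : y + (x + z) + (x + y + z) = 0 := by
      rw [show y + (x + z) + (x + y + z) = (x + x) + (y + y) + (z + z) from by abel]
      simp [addself]
    have hcef : x + y + (x + z) + (y + z) = 0 := by
      rw [show x + y + (x + z) + (y + z) = (x + x) + (y + y) + (z + z) from by abel]
      simp [addself]
    -- translate line facts, rewriting σ y into σ x
    have tABC := hL x y (x + y) hx hy hxy0 habc
    have dAC : D2 (σ x) (σ (x + y)) := fun i h1 h2 => tABC i h1 (hσ ▸ h1) h2
    have tADE := hL x z (x + z) hx hz0 hxz0 hade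
    have tBDF := hL y z (y + z) hy hz0 hyz0 hbdf
    have tADF : T3 (σ x) (σ z) (σ (y + z)) := fun i h1 h2 h3 => tBDF i (hσ ▸ h1) h2 h3
    have tAFG := hL x (y + z) (x + y + z) hx hyz0 hxyz0 hafg
    have tBEG := hL y (x + z) (x + y + z) hy hxz0 hxyz0 hbeg
    have tAEG : T3 (σ x) (σ (x + z)) (σ (x + y + z)) :=
      fun i h1 h2 h3 => tBEG i (hσ ▸ h1) h2 h3
    have tCDG := hL (x + y) z (x + y + z) hxy0 hz0 hxyz0 hcdg
    have tCEF := hL (x + y) (x + z) (y + z) hxy0 hxz0 hyz0 hcef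
    exact lemma_afterNorm hK (hM x hx) (hM (x + y) hxy0) (hM z hz0) (hM (x + z) hxz0)
      (hM (y + z) hyz0) (hM (x + y + z) hxyz0) dAC tADE tAFG tADF tAEG tCDG tCEF


/-! ### matrix (k=3) implies S3 -/

theorem S3_of_matrix3 (hK : IsSimplicialComplex m K)
    (h : ∃ S : Matrix (Fin m) (Fin 3) ℤ, CondA m 3 K S) : CondS3 m K := by
  obtain ⟨S, hA⟩ := h
  have hw : ∀ w : V3, ∃ τ, w ≠ 0 →
      MinimalNonSimplex m K τ ∧ ∀ i ∈ τ, dot w (red (S i)) = 1 := by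
    intro w
    by_cases hw0 : w = 0
    · exact ⟨∅, fun h => absurd hw0 h⟩
    · obtain ⟨τ, h1, h2⟩ := exists_mns_dot_one hA w hw0
      exact ⟨τ, fun _ => ⟨h1, h2⟩⟩
  choose σ hσ using hw
  apply core_fwd hK σ (fun w hw0 => (hσ w hw0).1)
  intro w₁ w₂ w₃ h1 h2 h3 hsum i hi1 hi2 hi3
  have e1 := (hσ w₁ h1).2 i hi1
  have e2 := (hσ w₂ h2).2 i hi2
  have e3 := (hσ w₃ h3).2 i hi3
  have hkey : dot (w₁ + w₂ + w₃) (red (S i)) = 1 + 1 + 1 := by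
    rw [dot_add_left, dot_add_left, e1, e2, e3]
  rw [hsum] at hkey
  rw [show dot (0 : V3) (red (S i)) = 0 from by simp [dot]] at hkey
  exact absurd hkey (by decide)

/-! ### S3 implies matrix (k=3) -/

def pt : Fin 8 → V3 := ![0, ![0,0,1], ![0,1,0], ![0,1,1], ![1,0,0], ![1,0,1], ![1,1,0], ![1,1,1]]

theorem V3cases : ∀ w : V3, w = 0 ∨ w = pt 1 ∨ w = pt 2 ∨ w = pt 3 ∨ w = pt 4 ∨ w = pt 5 ∨
    w = pt 6 ∨ w = pt 7 := by decide

theorem capB : ∀ b1 b2 b3 b4 b5 b6 b7 : Bool,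
    ¬(b1 ∧ b2 ∧ b3) → ¬(b1 ∧ b4 ∧ b5) → ¬(b1 ∧ b6 ∧ b7) → ¬(b2 ∧ b4 ∧ b6) →
    ¬(b2 ∧ b5 ∧ b7) → ¬(b3 ∧ b4 ∧ b7) → ¬(b3 ∧ b5 ∧ b6) →
    ∃ v : V3, v ≠ 0 ∧ (b1 → dot (pt 1) v = 1) ∧ (b2 → dot (pt 2) v = 1) ∧
      (b3 → dot (pt 3) v = 1) ∧ (b4 → dot (pt 4) v = 1) ∧ (b5 → dot (pt 5) v = 1) ∧
      (b6 → dot (pt 6) v = 1) ∧ (b7 → dot (pt 7) v = 1) := by decide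

def lift3 (v : V3) : Fin 3 → ℤ := fun j => ((v j).val : ℤ)

def det3 (a b c : Fin 3 → ℤ) : ℤ :=
  a 0 * (b 1 * c 2 - b 2 * c 1) - a 1 * (b 0 * c 2 - b 2 * c 0) + a 2 * (b 0 * c 1 - b 1 * c 0)

theorem det_of_eq (a b c : Fin 3 → ℤ) : (Matrix.of ![a, b, c]).det = det3 a b c := by
  simp [Matrix.det_fin_three, det3]; ring

theorem range3 (u v w : Fin 3 → ℤ) : Set.range ![u, v, w] = {u, v, w} := by
  simp [Matrix.range_cons, Matrix.range_empty]; aesop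

theorem d1 : ∀ v : V3, v ≠ 0 → ∃ w : V3, w ≠ 0 ∧ dot w v = 0 := by decide

theorem d2 : ∀ v v' : V3, v ≠ 0 → v' ≠ 0 → v ≠ v' →
    ∃ w : V3, w ≠ 0 ∧ dot w v = 0 ∧ dot w v' = 0 := by decide

theorem d3 : ∀ v₁ v₂ v₃ : V3, v₁ ≠ 0 → v₂ ≠ 0 → v₃ ≠ 0 → v₂ ≠ v₁ → v₃ ≠ v₁ → v₃ ≠ v₂ →
    v₃ ≠ v₁ + v₂ →
    det3 (lift3 v₁) (lift3 v₂) (lift3 v₃) = 1 ∨ det3 (lift3 v₁) (lift3 v₂) (lift3 v₃) = -1 := by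
  decide

theorem dot_add_right {k : ℕ} (w v v' : Fin k → ZMod 2) :
    dot w (v + v') = dot w v + dot w v' := by
  simp [dot, mul_add, Finset.sum_add_distrib]

theorem buildMatrix (hK : IsSimplicialComplex m K) (ρ : Fin 8 → Finset (Fin m))
    (hM : ∀ j : Fin 8, j ≠ 0 → MinimalNonSimplex m K (ρ j))
    (l123 : T3 (ρ 1) (ρ 2) (ρ 3)) (l145 : T3 (ρ 1) (ρ 4) (ρ 5))
    (l167 : T3 (ρ 1) (ρ 6) (ρ 7)) (l246 : T3 (ρ 2) (ρ 4) (ρ 6))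
    (l257 : T3 (ρ 2) (ρ 5) (ρ 7)) (l347 : T3 (ρ 3) (ρ 4) (ρ 7))
    (l356 : T3 (ρ 3) (ρ 5) (ρ 6)) :
    ∃ S : Matrix (Fin m) (Fin 3) ℤ, CondA m 3 K S := by
  classical
  have hv : ∀ i : Fin m, ∃ v : V3, v ≠ 0 ∧
      ∀ j : Fin 8, j ≠ 0 → i ∈ ρ j → dot (pt j) v = 1 := by
    intro i
    obtain ⟨v, hv0, c1, c2, c3, c4, c5, c6, c7⟩ :=
      capB (decide (i ∈ ρ 1)) (decide (i ∈ ρ 2)) (decide (i ∈ ρ 3)) (decide (i ∈ ρ 4))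
        (decide (i ∈ ρ 5)) (decide (i ∈ ρ 6)) (decide (i ∈ ρ 7))
        (by simp only [decide_eq_true_eq]; exact fun ⟨a, b, c⟩ => l123 i a b c)
        (by simp only [decide_eq_true_eq]; exact fun ⟨a, b, c⟩ => l145 i a b c)
        (by simp only [decide_eq_true_eq]; exact fun ⟨a, b, c⟩ => l167 i a b c)
        (by simp only [decide_eq_true_eq]; exact fun ⟨a, b, c⟩ => l246 i a b c)
        (by simp only [decide_eq_true_eq]; exact fun ⟨a, b, c⟩ => l257 i a b c)
        (by simp only [decide_eq_true_eq]; exact fun ⟨a, b, c⟩ => l347 i a b c)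
        (by simp only [decide_eq_true_eq]; exact fun ⟨a, b, c⟩ => l356 i a b c)
    refine ⟨v, hv0, ?_⟩
    intro j hj hij
    fin_cases j
    · exact absurd rfl hj
    · exact c1 (by simpa using hij)
    · exact c2 (by simpa using hij)
    · exact c3 (by simpa using hij)
    · exact c4 (by simpa using hij)
    · exact c5 (by simpa using hij)
    · exact c6 (by simpa using hij)
    · exact c7 (by simpa using hij)
  choose μ hμ0 hμ1 using hv
  refine ⟨Matrix.of (fun i => lift3 (μ i)), ?_⟩
  apply condA_of_transversal hK
  intro C hC
  have hCw : ∀ w : V3, w ≠ 0 → ∃ i ∈ C, dot w (μ i) = 1 := by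
    intro w hw
    rcases V3cases w with h | h | h | h | h | h | h | h
    · exact absurd h hw
    · obtain ⟨i, hiρ, hiC⟩ := hC (ρ 1) (hM 1 (by decide))
      exact ⟨i, hiC, h ▸ hμ1 i 1 (by decide) hiρ⟩
    · obtain ⟨i, hiρ, hiC⟩ := hC (ρ 2) (hM 2 (by decide))
      exact ⟨i, hiC, h ▸ hμ1 i 2 (by decide) hiρ⟩
    · obtain ⟨i, hiρ, hiC⟩ := hC (ρ 3) (hM 3 (by decide))
      exact ⟨i, hiC, h ▸ hμ1 i 3 (by decide) hiρ⟩
    · obtain ⟨i, hiρ, hiC⟩ := hC (ρ 4) (hM 4 (by decide))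
      exact ⟨i, hiC, h ▸ hμ1 i 4 (by decide) hiρ⟩
    · obtain ⟨i, hiρ, hiC⟩ := hC (ρ 5) (hM 5 (by decide))
      exact ⟨i, hiC, h ▸ hμ1 i 5 (by decide) hiρ⟩
    · obtain ⟨i, hiρ, hiC⟩ := hC (ρ 6) (hM 6 (by decide))
      exact ⟨i, hiC, h ▸ hμ1 i 6 (by decide) hiρ⟩
    · obtain ⟨i, hiρ, hiC⟩ := hC (ρ 7) (hM 7 (by decide))
      exact ⟨i, hiC, h ▸ hμ1 i 7 (by decide) hiρ⟩
  obtain ⟨i₁, hi₁C, hd₁⟩ := hCw (pt 4) (by decide)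
  have hv₁0 : μ i₁ ≠ 0 := by
    intro h
    rw [h, show dot (pt 4) (0 : V3) = 0 from by simp [dot]] at hd₁
    exact absurd hd₁ (by decide)
  obtain ⟨w₂, hw₂0, hw₂⟩ := d1 (μ i₁) hv₁0
  obtain ⟨i₂, hi₂C, hd₂⟩ := hCw w₂ hw₂0
  have hv₂0 : μ i₂ ≠ 0 := by
    intro h
    rw [h, show dot w₂ (0 : V3) = 0 from by simp [dot]] at hd₂
    exact absurd hd₂ (by decide)
  have hne21 : μ i₂ ≠ μ i₁ := by
    intro h; rw [h, hw₂] at hd₂; exact absurd hd₂ (by decide)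
  obtain ⟨w₃, hw₃0, hw₃1, hw₃2⟩ := d2 (μ i₁) (μ i₂) hv₁0 hv₂0 (fun h => hne21 h.symm)
  obtain ⟨i₃, hi₃C, hd₃⟩ := hCw w₃ hw₃0
  have hv₃0 : μ i₃ ≠ 0 := by
    intro h
    rw [h, show dot w₃ (0 : V3) = 0 from by simp [dot]] at hd₃
    exact absurd hd₃ (by decide)
  have hne31 : μ i₃ ≠ μ i₁ := by
    intro h; rw [h, hw₃1] at hd₃; exact absurd hd₃ (by decide)
  have hne32 : μ i₃ ≠ μ i₂ := by
    intro h; rw [h, hw₃2] at hd₃; exact absurd hd₃ (by decide)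
  have hne3s : μ i₃ ≠ μ i₁ + μ i₂ := by
    intro h
    rw [h, dot_add_right, hw₃1, hw₃2] at hd₃
    exact absurd hd₃ (by decide)
  have hdet := d3 (μ i₁) (μ i₂) (μ i₃) hv₁0 hv₂0 hv₃0 hne21 hne31 hne32 hne3s
  have hunit : IsUnit (Matrix.of ![lift3 (μ i₁), lift3 (μ i₂), lift3 (μ i₃)]).det := by
    rcases hdet with h | h <;> rw [det_of_eq, h]
    · exact isUnit_one
    · exact IsUnit.neg isUnit_one
  have hspan := rows_span_top _ hunit
  rw [show (Set.range fun i => (Matrix.of ![lift3 (μ i₁), lift3 (μ i₂), lift3 (μ i₃)]) i) =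
      {lift3 (μ i₁), lift3 (μ i₂), lift3 (μ i₃)} from range3 _ _ _] at hspan
  refine top_unique (hspan ▸ Submodule.span_mono ?_)
  rintro u (rfl | rfl | rfl)
  · exact ⟨i₁, hi₁C, rfl⟩
  · exact ⟨i₂, hi₂C, rfl⟩
  · exact ⟨i₃, hi₃C, rfl⟩

theorem matrix3_of_S3 (hK : IsSimplicialComplex m K) (h : CondS3 m K) :
    ∃ S : Matrix (Fin m) (Fin 3) ℤ, CondA m 3 K S := by
  rcases h with ⟨τ₁, τ₂, τ₃, τ₄, τ₅, τ₆, τ₇, hMl, _, f124, f135, f167, f236, f257, f347, f456⟩ |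
    ⟨τ₁, τ₂, τ₃, τ₄, τ₅, τ₆, hMl, _, f13, f124, f125, f146, f156, f236, f345⟩ |
    ⟨τ₁, τ₂, τ₃, τ₄, τ₅, hMl, _, f12, f15, f134, f235, f245⟩ |
    ⟨τ₁, τ₂, τ₃, τ₄, hMl, _, fu, f234⟩ |
    ⟨τ₁, τ₂, τ₃, hMl, _, f12, f13, f23⟩
  · -- configuration 1
    have h1 := hMl τ₁ (by simp); have h2 := hMl τ₂ (by simp); have h3 := hMl τ₃ (by simp)
    have h4 := hMl τ₄ (by simp); have h5 := hMl τ₅ (by simp); have h6 := hMl τ₆ (by simp)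
    have h7 := hMl τ₇ (by simp)
    have t124 := T3_iff.mp f124; have t135 := T3_iff.mp f135; have t167 := T3_iff.mp f167
    have t236 := T3_iff.mp f236; have t257 := T3_iff.mp f257; have t347 := T3_iff.mp f347
    have t456 := T3_iff.mp f456
    refine buildMatrix hK ![∅, τ₃, τ₂, τ₆, τ₁, τ₅, τ₄, τ₇] ?_
      (fun i h3 h2 h6 => t236 i h2 h3 h6)
      (fun i h3 h1 h5 => t135 i h1 h3 h5)
      (fun i h3 h4 h7 => t347 i h3 h4 h7)
      (fun i h2 h1 h4 => t124 i h1 h2 h4)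
      (fun i h2 h5 h7 => t257 i h2 h5 h7)
      (fun i h6 h1 h7 => t167 i h1 h6 h7)
      (fun i h6 h5 h4 => t456 i h4 h5 h6)
    intro j hj
    fin_cases j
    · exact absurd rfl hj
    exacts [h3, h2, h6, h1, h5, h4, h7]
  · -- configuration 2
    have h1 := hMl τ₁ (by simp); have h2 := hMl τ₂ (by simp); have h3 := hMl τ₃ (by simp)
    have h4 := hMl τ₄ (by simp); have h5 := hMl τ₅ (by simp); have h6 := hMl τ₆ (by simp)
    have d13 := D2_iff.mp f13
    have t124 := T3_iff.mp f124; have t125 := T3_iff.mp f125; have t146 := T3_iff.mp f146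
    have t156 := T3_iff.mp f156; have t236 := T3_iff.mp f236; have t345 := T3_iff.mp f345
    refine buildMatrix hK ![∅, τ₂, τ₁, τ₅, τ₁, τ₄, τ₃, τ₆] ?_
      (fun i h2 h1 h5 => t125 i h1 h2 h5)
      (fun i h2 h1 h4 => t124 i h1 h2 h4)
      (fun i h2 h3 h6 => t236 i h2 h3 h6)
      (fun i h1 _ h3 => d13 i h1 h3)
      (fun i h1 h4 h6 => t146 i h1 h4 h6)
      (fun i h5 h1 h6 => t156 i h1 h5 h6)
      (fun i h5 h4 h3 => t345 i h3 h4 h5)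
    intro j hj
    fin_cases j
    · exact absurd rfl hj
    exacts [h2, h1, h5, h1, h4, h3, h6]
  · -- configuration 3
    have h1 := hMl τ₁ (by simp); have h2 := hMl τ₂ (by simp); have h3 := hMl τ₃ (by simp)
    have h4 := hMl τ₄ (by simp); have h5 := hMl τ₅ (by simp)
    have d12 := D2_iff.mp f12; have d15 := D2_iff.mp f15
    have t134 := T3_iff.mp f134; have t235 := T3_iff.mp f235; have t245 := T3_iff.mp f245
    refine buildMatrix hK ![∅, τ₅, τ₂, τ₃, τ₁, τ₅, τ₂, τ₄] ?_
      (fun i h5 h2 h3 => t235 i h2 h3 h5)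
      (fun i h5 h1 _ => d15 i h1 h5)
      (fun i h5 h2 h4 => t245 i h2 h4 h5)
      (fun i h2 h1 _ => d12 i h1 h2)
      (fun i h2 h5 h4 => t245 i h2 h4 h5)
      (fun i h3 h1 h4 => t134 i h1 h3 h4)
      (fun i h3 h5 h2 => t235 i h2 h3 h5)
    intro j hj
    fin_cases j
    · exact absurd rfl hj
    exacts [h5, h2, h3, h1, h5, h2, h4]
  · -- configuration 4
    have h1 := hMl τ₁ (by simp); have h2 := hMl τ₂ (by simp); have h3 := hMl τ₃ (by simp)
    have h4 := hMl τ₄ (by simp)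
    have d12 : D2 τ₁ τ₂ := by
      intro i hi1 hi2
      have : i ∈ τ₁ ∩ (τ₂ ∪ τ₃ ∪ τ₄) := by
        rw [Finset.mem_inter, Finset.mem_union, Finset.mem_union]
        exact ⟨hi1, Or.inl (Or.inl hi2)⟩
      rw [fu] at this; simp at this
    have d13 : D2 τ₁ τ₃ := by
      intro i hi1 hi2
      have : i ∈ τ₁ ∩ (τ₂ ∪ τ₃ ∪ τ₄) := by
        rw [Finset.mem_inter, Finset.mem_union, Finset.mem_union]
        exact ⟨hi1, Or.inl (Or.inr hi2)⟩
      rw [fu] at this; simp at this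
    have d14 : D2 τ₁ τ₄ := by
      intro i hi1 hi2
      have : i ∈ τ₁ ∩ (τ₂ ∪ τ₃ ∪ τ₄) := by
        rw [Finset.mem_inter, Finset.mem_union, Finset.mem_union]
        exact ⟨hi1, Or.inr hi2⟩
      rw [fu] at this; simp at this
    have t234 := T3_iff.mp f234
    refine buildMatrix hK ![∅, τ₁, τ₁, τ₄, τ₁, τ₃, τ₂, τ₁] ?_
      (fun i h1 _ h4 => d14 i h1 h4)
      (fun i h1 _ h3 => d13 i h1 h3)
      (fun i h1 h2 _ => d12 i h1 h2)
      (fun i h1 _ h2 => d12 i h1 h2)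
      (fun i h1 h3 _ => d13 i h1 h3)
      (fun i h4 h1 _ => d14 i h1 h4)
      (fun i h4 h3 h2 => t234 i h2 h3 h4)
    intro j hj
    fin_cases j
    · exact absurd rfl hj
    exacts [h1, h1, h4, h1, h3, h2, h1]
  · -- configuration 5
    have h1 := hMl τ₁ (by simp); have h2 := hMl τ₂ (by simp); have h3 := hMl τ₃ (by simp)
    have d12 := D2_iff.mp f12; have d13 := D2_iff.mp f13; have d23 := D2_iff.mp f23
    refine buildMatrix hK ![∅, τ₃, τ₂, τ₃, τ₁, τ₂, τ₁, τ₁] ?_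
      (fun i h3 h2 _ => d23 i h2 h3)
      (fun i h3 h1 _ => d13 i h1 h3)
      (fun i h3 h1 _ => d13 i h1 h3)
      (fun i h2 h1 _ => d12 i h1 h2)
      (fun i h2 _ h1 => d12 i h1 h2)
      (fun i h3 h1 _ => d13 i h1 h3)
      (fun i h3 h2 _ => d23 i h2 h3)
    intro j hj
    fin_cases j
    · exact absurd rfl hj
    exacts [h3, h2, h3, h1, h2, h1, h1]

end Buch

/-- `s(K) = 2` iff condition (S2) holds and condition (S3) fails. -/
theorem stmt_17 (m : ℕ) (K : Set (Finset (Fin m))) (hK : IsSimplicialComplex m K) :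
    ((∃ S : Matrix (Fin m) (Fin 2) ℤ, CondA m 2 K S) ∧
      ¬(∃ S : Matrix (Fin m) (Fin 3) ℤ, CondA m 3 K S)) ↔
      (CondS2 m K ∧ ¬CondS3 m K) := by
  constructor
  · rintro ⟨h2, h3⟩
    exact ⟨Buch.S2_of_matrix2 hK h2, fun hS3 => h3 (Buch.matrix3_of_S3 hK hS3)⟩
  · rintro ⟨hS2, hS3⟩
    exact ⟨Buch.matrix2_of_S2 hK hS2, fun hmat => hS3 (Buch.S3_of_matrix3 hK hmat)⟩
end

section
/- Suppose [m] = ω₁ ∪ ⋯ ∪ ω_l, where each ω_i ⊆ [m] is a non-simplex of K (ω_i ∉ K). Let k = m − (|ω₁| + ⋯ + |ω_l|) + l. If k ≥ 1, then s(K) ≥ k, i.e., there exists an m×k integer matrix satisfying condition (A) for K. In particular, if the ω_i are pairwise disjoint non-simplices covering [m], then s(K) ≥ l. -/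
open Classical in
/-- Extract two non-related elements from a non-pairwise list, up to permutation. -/
lemma extract_pair {α : Type*} (R : α → α → Prop) :
    ∀ L : List α, ¬ L.Pairwise R → ∃ a b L', L.Perm (a :: b :: L') ∧ ¬ R a b := by
  intro L
  induction L with
  | nil => intro h; exact absurd List.Pairwise.nil h
  | cons x T ih =>
    intro h
    classical
    rw [List.pairwise_cons] at h
    by_cases hx : ∀ y ∈ T, R x y
    · have hT : ¬ T.Pairwise R := fun hp => h ⟨hx, hp⟩
      obtain ⟨a, b, L', hperm, hab⟩ := ih hT
      refine ⟨a, b, x :: L', ?_, hab⟩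
      refine (hperm.cons x).trans ?_
      refine (List.Perm.swap a x (b :: L')).trans ?_
      exact (List.Perm.swap b x L').cons a
    · push_neg at hx
      obtain ⟨b, hbT, hxb⟩ := hx
      exact ⟨x, b, T.erase b, ((List.perm_cons_erase hbT).cons x), hxb⟩

/-- A cover of `Fin m` has total cardinality at least `m`. -/
lemma cover_card_le {m : ℕ} :
    ∀ L : List (Finset (Fin m)), (∀ i : Fin m, ∃ ω ∈ L, i ∈ ω) →
      m ≤ (L.map Finset.card).sum := by
  intro L
  induction L with
  | nil =>
    intro h
    rcases Nat.eq_zero_or_pos m with hm | hm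
    · simp [hm]
    · obtain ⟨ω, hω, _⟩ := h ⟨0, hm⟩
      simp at hω
  | cons a T ih =>
    intro h
    have hmemfold : ∀ (T' : List (Finset (Fin m))) (ω : Finset (Fin m)) (i : Fin m),
        ω ∈ T' → i ∈ ω → i ∈ T'.foldr (· ∪ ·) ∅ := by
      intro T' ω i hωT hiω
      induction T' with
      | nil => simp at hωT
      | cons b T'' ihT =>
        rcases List.mem_cons.mp hωT with rfl | h'
        · exact Finset.mem_union_left _ hiω
        · exact Finset.mem_union_right _ (ihT h')
    have hsub : (Finset.univ : Finset (Fin m)) ⊆ a ∪ T.foldr (· ∪ ·) ∅ := by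
      intro i _
      obtain ⟨ω, hω, hiω⟩ := h i
      rcases List.mem_cons.mp hω with rfl | hωT
      · exact Finset.mem_union_left _ hiω
      · exact Finset.mem_union_right _ (hmemfold T ω i hωT hiω)
    have hfold : ∀ T' : List (Finset (Fin m)),
        (T'.foldr (· ∪ ·) ∅).card ≤ (T'.map Finset.card).sum := by
      intro T'
      induction T' with
      | nil => simp
      | cons b T'' ihT =>
        simp only [List.foldr_cons, List.map_cons, List.sum_cons]
        exact le_trans (Finset.card_union_le _ _) (Nat.add_le_add_left ihT _)
    calc m = (Finset.univ : Finset (Fin m)).card := (Finset.card_fin m).symm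
      _ ≤ (a ∪ T.foldr (· ∪ ·) ∅).card := Finset.card_le_card hsub
      _ ≤ a.card + (T.foldr (· ∪ ·) ∅).card := Finset.card_union_le _ _
      _ ≤ a.card + (T.map Finset.card).sum := Nat.add_le_add_left (hfold T) _
      _ = ((a :: T).map Finset.card).sum := by simp

/-- Main combinatorial lemma: from a cover by non-simplices with the cardinality
bound, one can partition `Fin m` into `k` non-simplex classes. -/
lemma partition_lemma {m k : ℕ} {K : Set (Finset (Fin m))}
    (hKd : ∀ σ ∈ K, ∀ τ ⊆ σ, τ ∈ K) (hk1 : 1 ≤ k) :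
    ∀ n (L : List (Finset (Fin m))), L.length = n →
      (∀ ω ∈ L, ω ∉ K) → (∀ i : Fin m, ∃ ω ∈ L, i ∈ ω) →
      k + (L.map Finset.card).sum ≤ m + L.length →
      ∃ c : Fin m → Fin k, ∀ j, (Finset.univ.filter (fun i => c i = j)) ∉ K := by
  intro n
  induction n using Nat.strong_induction_on with
  | _ n IH =>
    intro L hlen hns hcov hsum
    by_cases hdisj : L.Pairwise Disjoint
    · -- disjoint case
      have hklen : k ≤ L.length := by
        have := cover_card_le L hcov
        omega
      -- choose for each i its index in L
      have hex : ∀ i : Fin m, ∃ nn : Fin L.length, i ∈ L.get nn := by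
        intro i
        obtain ⟨ω, hω, hi⟩ := hcov i
        obtain ⟨nn, hnn⟩ := List.mem_iff_get.mp hω
        exact ⟨nn, hnn ▸ hi⟩
      choose c₀ hc₀ using hex
      have hdisj' : ∀ p q : Fin L.length, p ≠ q → Disjoint (L.get p) (L.get q) := by
        intro p q hpq
        rcases lt_or_gt_of_ne hpq with h | h
        · exact List.pairwise_iff_get.mp hdisj p q h
        · exact (List.pairwise_iff_get.mp hdisj q p h).symm
      -- the fiber of c₀ at j contains L.get j
      have hfib : ∀ j : Fin L.length, L.get j ⊆
          Finset.univ.filter (fun i => c₀ i = j) := by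
        intro j i hi
        refine Finset.mem_filter.mpr ⟨Finset.mem_univ _, ?_⟩
        by_contra hne
        exact (hdisj' _ _ hne).forall_ne_finset (hc₀ i) hi rfl
      -- compress Fin L.length to Fin k
      classical
      set f : Fin L.length → Fin k :=
        fun p => if h : p.val < k then ⟨p.val, h⟩ else ⟨0, hk1⟩ with hf
      refine ⟨fun i => f (c₀ i), fun j => ?_⟩
      have hemb : (⟨j.val, lt_of_lt_of_le j.isLt hklen⟩ : Fin L.length) ∈
          Finset.univ.filter (fun p => f p = j) := by
        simp only [hf, Finset.mem_filter, Finset.mem_univ, true_and]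
        simp [j.isLt]
      set e : Fin L.length := ⟨j.val, lt_of_lt_of_le j.isLt hklen⟩ with he
      have hsubset : L.get e ⊆ Finset.univ.filter (fun i => f (c₀ i) = j) := by
        intro i hi
        have h1 := hfib e hi
        simp only [Finset.mem_filter, Finset.mem_univ, true_and] at h1 ⊢
        rw [h1]
        simpa using (Finset.mem_filter.mp hemb).2
      intro hmem
      exact hns (L.get e) (List.get_mem L e) (hKd _ hmem _ hsubset)
    · -- merging case
      obtain ⟨A, B, L', hperm, hab⟩ := extract_pair Disjoint L hdisj
      classical
      have hcard : 1 ≤ (A ∩ B).card := by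
        rw [Nat.one_le_iff_ne_zero, Ne, Finset.card_eq_zero]
        intro h0
        exact hab (Finset.disjoint_iff_inter_eq_empty.mpr h0)
      have hlenL : L.length = L'.length + 2 := by
        rw [hperm.length_eq]; simp
      have hsumL : (L.map Finset.card).sum =
          A.card + B.card + (L'.map Finset.card).sum := by
        rw [(hperm.map Finset.card).sum_eq]
        simp
        omega
      refine IH (L'.length + 1) (by omega) ((A ∪ B) :: L') (by simp) ?_ ?_ ?_
      · intro ω hω
        rcases List.mem_cons.mp hω with rfl | h'
        · intro hmem
          exact hns A (hperm.mem_iff.mpr (by simp))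
            (hKd _ hmem _ Finset.subset_union_left)
        · exact hns ω (hperm.mem_iff.mpr (by simp [h']))
      · intro i
        obtain ⟨ω, hω, hi⟩ := hcov i
        rcases List.mem_cons.mp (hperm.mem_iff.mp hω) with rfl | h'
        · exact ⟨ω ∪ B, by simp, Finset.mem_union_left _ hi⟩
        · rcases List.mem_cons.mp h' with rfl | h''
          · exact ⟨A ∪ ω, by simp, Finset.mem_union_right _ hi⟩
          · exact ⟨ω, by simp [h''], hi⟩
      · have hcup : (A ∪ B).card + (A ∩ B).card = A.card + B.card :=
          Finset.card_union_add_card_inter A B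
        simp only [List.map_cons, List.sum_cons, List.length_cons]
        omega




/-- If `[m] = ω₁ ∪ ⋯ ∪ ω_l` where each `ωᵢ` is a non-simplex of `K`, and
`k = m - (|ω₁| + ⋯ + |ω_l|) + l ≥ 1`, then `s(K) ≥ k`; in particular, if the `ωᵢ` are
pairwise disjoint non-simplices covering `[m]`, then `s(K) ≥ l`. -/

theorem stmt_18 (m l k : ℕ) (K : Set (Finset (Fin m))) (hK : IsSimplicialComplex m K)
    (ω : Fin l → Finset (Fin m)) (hns : ∀ i, ω i ∉ K)
    (hcover : Finset.univ.biUnion ω = Finset.univ)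
    (hk : k + (∑ i, (ω i).card) = m + l) (hk1 : 1 ≤ k) :
    ∃ S : Matrix (Fin m) (Fin k) ℤ, CondA m k K S := by
  classical
  have h1 : ∀ τ ∈ List.ofFn ω, τ ∉ K := by
    intro τ hτ
    obtain ⟨i, rfl⟩ := List.mem_ofFn.mp hτ
    exact hns i
  have h2 : ∀ i : Fin m, ∃ τ ∈ List.ofFn ω, i ∈ τ := by
    intro i
    have : i ∈ Finset.univ.biUnion ω := hcover ▸ Finset.mem_univ i
    obtain ⟨j, _, hj⟩ := Finset.mem_biUnion.mp this
    exact ⟨ω j, List.mem_ofFn.mpr ⟨j, rfl⟩, hj⟩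
  have h3 : k + ((List.ofFn ω).map Finset.card).sum ≤ m + (List.ofFn ω).length := by
    have : (List.map Finset.card (List.ofFn ω)).sum = ∑ i, (ω i).card := by
      rw [List.map_ofFn, List.sum_ofFn]
      rfl
    simp only [List.length_ofFn, this]
    omega
  obtain ⟨c, hc⟩ := partition_lemma (m := m) (k := k) hK.2 hk1 l (List.ofFn ω)
      (by simp) h1 h2 h3
  refine ⟨fun i j => if j = c i then 1 else 0, ?_⟩
  intro σ hσ
  rw [eq_top_iff, ← (Pi.basisFun ℤ (Fin k)).span_eq, Submodule.span_le]
  rintro x ⟨j, rfl⟩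
  have hfib := hc j
  have hnsub : ¬ (Finset.univ.filter (fun i => c i = j) ⊆ σ) := by
    intro hsub
    exact hfib (hK.2 σ hσ _ hsub)
  obtain ⟨i, hi, hiσ⟩ := Finset.not_subset.mp hnsub
  have hci : c i = j := (Finset.mem_filter.mp hi).2
  have hin : (fun j' => if j' = c i then (1 : ℤ) else 0) ∈
      ((fun i => (fun i j => if j = c i then (1 : ℤ) else 0) i) '' {i : Fin m | i ∉ σ}) :=
    ⟨i, hiσ, rfl⟩
  have hmem := Submodule.subset_span (R := ℤ) hin
  have heq : (Pi.basisFun ℤ (Fin k)) j = fun j' => if j' = c i then (1 : ℤ) else 0 := by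
    rw [Pi.basisFun_apply]
    funext j'
    rw [hci]
    simp [Pi.single_apply]
  rw [heq]
  exact hmem
end
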